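/- arXiv:1103.6271 — 7 statements merged into one kernel-verified Lean document; each statement's English description precedes it below -/
import Mathlib

section
/- Let f(x) = sin(x)(1 - 1/(8 sin(x/2)^3)) for x in (0, 2π). Then f'(x) ≥ f'(π) = -7/8 for all x in (0, 2π). -/
open Real Set

noncomputable def f (x : ℝ) : ℝ := Real.sin x * (1 - 1 / (8 * (Real.sin (x/2))^3))

lemma sin_half_pos {x : ℝ} (hx : x ∈ Ioo (0:ℝ) (2*π)) : 0 < Real.sin (x/2) := by
  apply Real.sin_pos_of_pos_of_lt_pi
  · linarith [hx.1]
  · linarith [hx.2]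

lemma deriv_f_eq {x : ℝ} (hx : x ∈ Ioo (0:ℝ) (2*π)) :
    deriv f x = Real.cos x + (2 - Real.sin (x/2)^2) / (8 * Real.sin (x/2)^3) := by
  have hs := sin_half_pos hx
  have hs3 : (8:ℝ) * Real.sin (x/2)^3 ≠ 0 := by positivity
  have h1 : HasDerivAt (fun y : ℝ => Real.sin (y/2)) (Real.cos (x/2) * (1/2)) x := by
    have := (Real.hasDerivAt_sin (x/2)).comp x ((hasDerivAt_id x).div_const 2)
    simpa [Function.comp_def] using this
  have h2 : HasDerivAt (fun y : ℝ => 8 * (Real.sin (y/2))^3)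
      (8 * (3 * Real.sin (x/2)^2 * (Real.cos (x/2) * (1/2)))) x := by
    simpa [mul_comm, mul_assoc, mul_left_comm] using ((h1.pow 3).const_mul 8)
  have h3 : HasDerivAt (fun y : ℝ => 1 - 1/(8 * (Real.sin (y/2))^3))
      (-((0 * (8 * Real.sin (x/2)^3) - 1 * (8 * (3 * Real.sin (x/2)^2 * (Real.cos (x/2) * (1/2)))))
        / (8 * Real.sin (x/2)^3)^2)) x := by
    exact (((hasDerivAt_const x (1:ℝ)).div h2 hs3)).const_sub 1
  have h4 : HasDerivAt f _ x := (Real.hasDerivAt_sin x).mul h3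
  rw [h4.deriv]
  have hsin : Real.sin x = 2 * Real.sin (x/2) * Real.cos (x/2) := by
    rw [show x = 2*(x/2) by ring, Real.sin_two_mul]
    ring_nf
  have hcos : Real.cos x = 1 - 2 * Real.sin (x/2)^2 := by
    have h := Real.cos_two_mul (x/2)
    rw [show 2*(x/2) = x by ring] at h
    have := Real.sin_sq_add_cos_sq (x/2)
    linarith
  have hpyth : Real.cos (x/2)^2 = 1 - Real.sin (x/2)^2 := by
    have := Real.sin_sq_add_cos_sq (x/2); linarith
  rw [hsin, hcos]
  field_simp
  linear_combination 3 * hpyth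

theorem stmt2 : deriv f π = -7/8 ∧ ∀ x ∈ Ioo (0:ℝ) (2*π), deriv f x ≥ -7/8 := by
  constructor
  · have hx : π ∈ Ioo (0:ℝ) (2*π) := ⟨Real.pi_pos, by linarith [Real.pi_pos]⟩
    rw [deriv_f_eq hx]
    simp [Real.sin_pi_div_two, Real.cos_pi]
    norm_num
  · intro x hx
    rw [deriv_f_eq hx]
    set s := Real.sin (x/2) with hsdef
    have hs : 0 < s := sin_half_pos hx
    have hs1 : s ≤ 1 := Real.sin_le_one _
    have hcos : Real.cos x = 1 - 2 * s^2 := by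
      have h := Real.cos_two_mul (x/2)
      rw [show 2*(x/2) = x by ring] at h
      have := Real.sin_sq_add_cos_sq (x/2)
      simp only [← hsdef] at h this ⊢
      linarith
    rw [hcos, ge_iff_le, ← sub_nonneg]
    have hs3 : (8:ℝ) * s^3 ≠ 0 := by positivity
    have key : 1 - 2*s^2 + (2 - s^2)/(8*s^3) - (-7/8) =
        ((1-s)*(16*s^4+16*s^3+s^2+2*s+2))/(8*s^3) := by
      field_simp
      ring
    rw [key]
    apply div_nonneg _ (by positivity)
    have h1s : 0 ≤ 1 - s := by linarith
    positivity
end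

section
/- Let f(x) = sin(x)(1 - 1/(8 sin(x/2)^3)) for x in (0, 2π). Then the third derivative f'''(x) > 0 for all x in (0, 2π). -/
open Real Set

lemma cos_eq (x : ℝ) : Real.cos x = 1 - 2 * (Real.sin (x/2))^2 := by
  have h := Real.cos_two_mul (x/2)
  rw [show 2*(x/2) = x by ring] at h
  have := Real.sin_sq_add_cos_sq (x/2)
  nlinarith

lemma sin_eq (x : ℝ) : Real.sin x = 2 * Real.sin (x/2) * Real.cos (x/2) := by
  have h := Real.sin_two_mul (x/2)
  rw [show 2*(x/2) = x by ring] at h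
  linarith

noncomputable def g1 (x : ℝ) : ℝ :=
  Real.cos x + (2 - (Real.sin (x/2))^2) / (8 * (Real.sin (x/2))^3)

noncomputable def g2 (x : ℝ) : ℝ :=
  -Real.sin x + (Real.cos (x/2) * ((Real.sin (x/2))^2 - 6)) / (16 * (Real.sin (x/2))^4)

noncomputable def g3 (x : ℝ) : ℝ :=
  -Real.cos x + ((Real.sin (x/2))^4 - 20*(Real.sin (x/2))^2 + 24) / (32 * (Real.sin (x/2))^5)

lemma hd1 {x : ℝ} (hx : x ∈ Ioo (0:ℝ) (2*π)) : HasDerivAt f (g1 x) x := by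
  have hs := sin_half_pos hx
  have hx2 : HasDerivAt (fun y : ℝ => y/2) (1/2) x := (hasDerivAt_id x).div_const 2
  have hsin : HasDerivAt (fun y => Real.sin (y/2)) (Real.cos (x/2) * (1/2)) x :=
    by have := (Real.hasDerivAt_sin (x/2)).comp x hx2; exact this
  have hden : HasDerivAt (fun y => 8 * (Real.sin (y/2))^3)
      (8 * (3 * (Real.sin (x/2))^2 * (Real.cos (x/2) * (1/2)))) x :=
    ((hsin.pow 3).const_mul 8)
  have hne : 8 * (Real.sin (x/2))^3 ≠ 0 := by positivity
  have hdiv := (hasDerivAt_const x (1:ℝ)).div hden hne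
  have hf := (Real.hasDerivAt_sin x).mul ((hasDerivAt_const x (1:ℝ)).sub hdiv)
  refine hf.congr_deriv ?_
  symm
  simp only [Pi.sub_apply, Pi.div_apply]
  unfold g1
  rw [cos_eq x, sin_eq x]
  have hc2 : (Real.cos (x/2))^2 = 1 - (Real.sin (x/2))^2 := by
    have := Real.sin_sq_add_cos_sq (x/2); linarith
  set s := Real.sin (x/2) with hsdef
  set c := Real.cos (x/2) with hcdef
  have hsne : s ≠ 0 := ne_of_gt hs
  field_simp
  linear_combination (-3 : ℝ) * hc2

lemma hd2 {x : ℝ} (hx : x ∈ Ioo (0:ℝ) (2*π)) : HasDerivAt g1 (g2 x) x := by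
  have hs := sin_half_pos hx
  have hx2 : HasDerivAt (fun y : ℝ => y/2) (1/2) x := (hasDerivAt_id x).div_const 2
  have hsin : HasDerivAt (fun y => Real.sin (y/2)) (Real.cos (x/2) * (1/2)) x :=
    by have := (Real.hasDerivAt_sin (x/2)).comp x hx2; exact this
  have hden : HasDerivAt (fun y => 8 * (Real.sin (y/2))^3)
      (8 * (3 * (Real.sin (x/2))^2 * (Real.cos (x/2) * (1/2)))) x :=
    ((hsin.pow 3).const_mul 8)
  have hne : 8 * (Real.sin (x/2))^3 ≠ 0 := by positivity
  have hnum : HasDerivAt (fun y => 2 - (Real.sin (y/2))^2)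
      (0 - 2 * (Real.sin (x/2))^1 * (Real.cos (x/2) * (1/2))) x :=
    (hasDerivAt_const x (2:ℝ)).sub (hsin.pow 2)
  have hg := (Real.hasDerivAt_cos x).add (hnum.div hden hne)
  refine hg.congr_deriv ?_
  symm
  unfold g2
  set s := Real.sin (x/2) with hsdef
  set c := Real.cos (x/2) with hcdef
  have hsne : s ≠ 0 := ne_of_gt hs
  field_simp
  ring

lemma hd3 {x : ℝ} (hx : x ∈ Ioo (0:ℝ) (2*π)) : HasDerivAt g2 (g3 x) x := by
  have hs := sin_half_pos hx
  have hx2 : HasDerivAt (fun y : ℝ => y/2) (1/2) x := (hasDerivAt_id x).div_const 2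
  have hsin : HasDerivAt (fun y => Real.sin (y/2)) (Real.cos (x/2) * (1/2)) x :=
    by have := (Real.hasDerivAt_sin (x/2)).comp x hx2; exact this
  have hcos : HasDerivAt (fun y => Real.cos (y/2)) (-Real.sin (x/2) * (1/2)) x :=
    by have := (Real.hasDerivAt_cos (x/2)).comp x hx2; exact this
  have hden : HasDerivAt (fun y => 16 * (Real.sin (y/2))^4)
      (16 * (4 * (Real.sin (x/2))^3 * (Real.cos (x/2) * (1/2)))) x :=
    ((hsin.pow 4).const_mul 16)
  have hne : 16 * (Real.sin (x/2))^4 ≠ 0 := by positivity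
  have hnum : HasDerivAt (fun y => Real.cos (y/2) * ((Real.sin (y/2))^2 - 6))
      ((-Real.sin (x/2) * (1/2)) * ((Real.sin (x/2))^2 - 6) +
        Real.cos (x/2) * (2 * (Real.sin (x/2))^1 * (Real.cos (x/2) * (1/2)))) x :=
    hcos.mul ((hsin.pow 2).sub_const 6)
  have hg := ((Real.hasDerivAt_sin x).neg).add (hnum.div hden hne)
  refine hg.congr_deriv ?_
  symm
  unfold g3
  have hc2 : (Real.cos (x/2))^2 = 1 - (Real.sin (x/2))^2 := by
    have := Real.sin_sq_add_cos_sq (x/2); linarith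
  set s := Real.sin (x/2) with hsdef
  set c := Real.cos (x/2) with hcdef
  have hsne : s ≠ 0 := ne_of_gt hs
  field_simp
  linear_combination (64*s^2 - 768 : ℝ) * hc2

theorem stmt3 : ∀ x ∈ Ioo (0:ℝ) (2*π), iteratedDeriv 3 f x > 0 := by
  intro x hx
  have hU : IsOpen (Ioo (0:ℝ) (2*π)) := isOpen_Ioo
  have e1 : ∀ y ∈ Ioo (0:ℝ) (2*π), deriv f y = g1 y := fun y hy => (hd1 hy).deriv
  have e2 : ∀ y ∈ Ioo (0:ℝ) (2*π), deriv (deriv f) y = g2 y := by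
    intro y hy
    have hev : deriv f =ᶠ[nhds y] g1 :=
      Filter.eventuallyEq_of_mem (hU.mem_nhds hy) (fun z hz => e1 z hz)
    rw [hev.deriv_eq, (hd2 hy).deriv]
  have e3 : deriv (deriv (deriv f)) x = g3 x := by
    have hev : deriv (deriv f) =ᶠ[nhds x] g2 :=
      Filter.eventuallyEq_of_mem (hU.mem_nhds hx) (fun z hz => e2 z hz)
    rw [hev.deriv_eq, (hd3 hx).deriv]
  have hit : iteratedDeriv 3 f x = deriv (deriv (deriv f)) x := by
    simp [iteratedDeriv_succ, iteratedDeriv_zero]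
  rw [gt_iff_lt, hit, e3]
  have hs := sin_half_pos hx
  have hs1 : Real.sin (x/2) ≤ 1 := Real.sin_le_one _
  unfold g3
  rw [cos_eq x]
  set s := Real.sin (x/2) with hsdef
  have key : 0 < (2*s^2 - 1) * (32*s^5) + (s^4 - 20*s^2 + 24) := by
    nlinarith [sq_nonneg (s-1), sq_nonneg (s+1), sq_nonneg (s^2-1), sq_nonneg (s^3-s),
      sq_nonneg (s^2-s), pow_pos hs 5, pow_pos hs 3, mul_pos hs hs, hs1, hs]
  have h32 : (0:ℝ) < 32*s^5 := by positivity
  have heq : -(1 - 2*s^2) + (s^4 - 20*s^2 + 24)/(32*s^5)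
      = ((2*s^2-1)*(32*s^5) + (s^4 - 20*s^2+24))/(32*s^5) := by
    field_simp
    ring
  rw [heq]
  exact div_pos key h32
end

section
/- Let f(x) = sin(x)(1 - 1/(8 sin(x/2)^3)) for x in (0, 2π). The only roots of f in (0, 2π) are x = π/3, x = π, and x = 5π/3. -/
open Real Set

lemma sin_eq_half {t : ℝ} (h0 : 0 < t) (h1 : t < π) (hs : Real.sin t = 1/2) :
    t = π/6 ∨ t = 5*π/6 := by
  have hpi := Real.pi_pos
  have h6 : Real.sin (π/6) = 1/2 := Real.sin_pi_div_six
  by_cases hle : t ≤ π/2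
  · left
    apply Real.injOn_sin ⟨by linarith, hle⟩ ⟨by linarith, by linarith⟩
    rw [hs, h6]
  · right
    push_neg at hle
    have : Real.sin (π - t) = 1/2 := by rw [Real.sin_pi_sub]; exact hs
    have heq : π - t = π/6 := by
      apply Real.injOn_sin ⟨by linarith, by linarith⟩ ⟨by linarith, by linarith⟩
      rw [this, h6]
    linarith

theorem stmt4 : ∀ x ∈ Ioo (0:ℝ) (2*π), (f x = 0 ↔ x = π/3 ∨ x = π ∨ x = 5*π/3) := by
  intro x hx
  obtain ⟨hx0, hx2⟩ := hx
  have hpi := Real.pi_pos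
  have hs0 : 0 < Real.sin (x/2) :=
    Real.sin_pos_of_pos_of_lt_pi (by linarith) (by linarith)
  constructor
  · intro hf
    unfold f at hf
    rcases mul_eq_zero.mp hf with h | h
    · -- sin x = 0
      right; left
      rw [Real.sin_eq_zero_iff] at h
      obtain ⟨n, hn⟩ := h
      have hn1 : n = 1 := by
        rcases lt_trichotomy n 1 with h1 | h1 | h1
        · have : (n : ℝ) ≤ 0 := by exact_mod_cast by omega
          nlinarith
        · exact h1
        · have : (2 : ℝ) ≤ (n : ℝ) := by exact_mod_cast by omega
          nlinarith
      rw [hn1] at hn; push_cast at hn; linarith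
    · -- 1 - 1/(8 s^3) = 0
      have hs3 : (0:ℝ) < 8 * (Real.sin (x/2))^3 := by positivity
      have h8 : 8 * (Real.sin (x/2))^3 = 1 := by
        field_simp at h
        linarith
      have hhalf : Real.sin (x/2) = 1/2 := by
        have hfac : (Real.sin (x/2) - 1/2) *
            ((Real.sin (x/2))^2 + Real.sin (x/2)/2 + 1/4) = 0 := by linear_combination h8 / 8
        have hpos : (0:ℝ) < (Real.sin (x/2))^2 + Real.sin (x/2)/2 + 1/4 := by positivity
        have := mul_eq_zero.mp hfac
        rcases this with h' | h'
        · linarith [sub_eq_zero.mp h']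
        · linarith
      rcases sin_eq_half (by linarith) (by linarith) hhalf with h' | h'
      · left; linarith
      · right; right; linarith
  · intro h
    rcases h with h | h | h <;> subst h <;> unfold f
    · have : (π/3)/2 = π/6 := by ring
      rw [this, Real.sin_pi_div_six]
      norm_num
    · rw [Real.sin_pi]; ring
    · have h1 : (5*π/3)/2 = π - π/6 := by ring
      rw [h1, Real.sin_pi_sub, Real.sin_pi_div_six]
      have h2 : Real.sin (5*π/3) = -Real.sin (π/3) := by
        have : 5*π/3 = -(π/3) + 2*π := by ring
        rw [this, Real.sin_add_two_pi, Real.sin_neg]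
      rw [h2]
      norm_num
end

section
/- Let f(x) = sin(x)(1 - 1/(8 sin(x/2)^3)). There exists a unique critical point θ_c of f in (0, π); moreover θ_c > 3π/5, f'(θ) > 0 for θ in (0, θ_c), and f'(θ) < 0 for θ in (θ_c, π). -/
open Real Set

/-- the polynomial governing the sign of `deriv f` -/
noncomputable def g (s : ℝ) : ℝ := 2 - s^2 + 8*s^3 - 16*s^5

lemma g_hasDeriv (s : ℝ) : HasDerivAt g (-2*s + 24*s^2 - 80*s^4) s := by
  have key : HasDerivAt (fun s:ℝ => 2 - s^2 + 8*s^3 - 16*s^5) (-2*s + 24*s^2 - 80*s^4) s := by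
    have h := (((hasDerivAt_const s (2:ℝ)).sub (hasDerivAt_pow 2 s)).add
      ((hasDerivAt_pow 3 s).const_mul 8)).sub ((hasDerivAt_pow 5 s).const_mul 16)
    refine h.congr_deriv ?_
    push_cast; ring
  exact key

lemma g_pos_small {s : ℝ} (h0 : 0 < s) (h1 : s ≤ 1/2) : 0 < g s := by
  have hsq : s^2 ≤ 1/4 := by nlinarith
  have hc : 8*s^3 - 16*s^5 ≥ 0 := by nlinarith [pow_pos h0 3]
  simp only [g]; nlinarith

lemma g_anti : StrictAntiOn g (Icc (1/2 : ℝ) 1) := by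
  apply strictAntiOn_of_deriv_neg (convex_Icc _ _)
  · exact Continuous.continuousOn (by unfold g; continuity)
  · intro s hs
    rw [interior_Icc] at hs
    rw [(g_hasDeriv s).deriv]
    obtain ⟨h1, h2⟩ := hs
    have hq : 0 < 20*s^2 + 10*s - 1 := by nlinarith
    have h2s : 0 < 2*s - 1 := by linarith
    nlinarith [mul_pos (mul_pos (by linarith : (0:ℝ) < s) h2s) hq]

lemma f_hasDeriv (x : ℝ) (hs : Real.sin (x/2) ≠ 0) :
    HasDerivAt f (g (Real.sin (x/2)) / (8 * (Real.sin (x/2))^3)) x := by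
  have h8 : (8:ℝ) * (Real.sin (x/2))^3 ≠ 0 := mul_ne_zero (by norm_num) (pow_ne_zero _ hs)
  have h1 : HasDerivAt (fun y => Real.sin (y/2)) (Real.cos (x/2) * (1/2)) x :=
    by exact (Real.hasDerivAt_sin (x/2)).comp x ((hasDerivAt_id' x).div_const 2)
  have h2 := (h1.pow 3).const_mul (8:ℝ)
  have h3 := h2.inv h8
  have h4 := h3.const_sub (1:ℝ)
  have h5 := (Real.hasDerivAt_sin x).mul h4
  have hfeq : f = fun y => Real.sin y * (1 - (8 * (Real.sin (y/2))^3)⁻¹) := by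
    funext y; simp [f, one_div]
  rw [hfeq]
  refine h5.congr_deriv ?_
  simp only [Pi.inv_apply, Pi.pow_apply]
  have hcs : Real.cos (x/2)^2 = 1 - Real.sin (x/2)^2 := by
    have := Real.sin_sq_add_cos_sq (x/2); linarith
  have hcx : Real.cos x = 1 - 2*(Real.sin (x/2))^2 := by
    have h := Real.cos_two_mul' (x/2)
    rw [show 2*(x/2) = x by ring] at h
    rw [h, hcs]; ring
  have hsx : Real.sin x = 2*(Real.sin (x/2))*(Real.cos (x/2)) := by
    have h := Real.sin_two_mul (x/2)
    rw [show 2*(x/2) = x by ring] at h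
    rw [h]
  rw [hcx, hsx]
  simp only [g]
  field_simp
  ring_nf
  ring_nf at hcs
  linear_combination (3 * Real.sin (x*(1/2))^2) * hcs

theorem stmt5 : ∃ θc ∈ Ioo (0:ℝ) π, deriv f θc = 0 ∧ θc > 3*π/5 ∧
    (∀ θ ∈ Ioo (0:ℝ) θc, deriv f θ > 0) ∧
    (∀ θ ∈ Ioo θc π, deriv f θ < 0) ∧
    (∀ θ ∈ Ioo (0:ℝ) π, deriv f θ = 0 → θ = θc) := by
  have pipos := Real.pi_pos
  have hGcont : ContinuousOn (fun θ => g (Real.sin (θ/2))) (Icc (π/2) π) :=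
    Continuous.continuousOn (by unfold g; continuity)
  have hGpi : g (Real.sin (π/2)) = -7 := by
    rw [Real.sin_pi_div_two]; simp [g]; norm_num
  have hGhalf : g (Real.sin ((π/2)/2)) = 3/2 := by
    rw [show (π/2)/2 = π/4 by ring, Real.sin_pi_div_four]
    have ht : (Real.sqrt 2)^2 = 2 := Real.sq_sqrt (by norm_num)
    simp only [g]
    linear_combination (-(Real.sqrt 2)^3/2 - 1/4) * ht
  have hiv := intermediate_value_Ioo' (by linarith : π/2 ≤ π) hGcont
  have h0mem : (0:ℝ) ∈ Ioo (g (Real.sin (π/2))) (g (Real.sin ((π/2)/2))) := by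
    rw [hGpi, hGhalf]; constructor <;> norm_num
  obtain ⟨θc, ⟨hθc1, hθc2⟩, hGθc⟩ := hiv h0mem
  have hGθc : g (Real.sin (θc/2)) = 0 := hGθc
  -- basic facts
  have hsinpos : ∀ θ ∈ Ioo (0:ℝ) π, 0 < Real.sin (θ/2) := by
    intro θ hθ
    exact Real.sin_pos_of_pos_of_lt_pi (by linarith [hθ.1]) (by linarith [hθ.2])
  have hsinmono : ∀ θ₁ θ₂ : ℝ, 0 < θ₁ → θ₁ < θ₂ → θ₂ ≤ π → Real.sin (θ₁/2) < Real.sin (θ₂/2) := by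
    intro θ₁ θ₂ h1 h2 h3
    exact Real.strictMonoOn_sin ⟨by linarith, by linarith⟩ ⟨by linarith, by linarith⟩ (by linarith)
  have hsc_half : 1/2 < Real.sin (θc/2) := by
    have h := hsinmono (π/2) θc (by linarith) hθc1 (le_of_lt hθc2)
    rw [show (π/2)/2 = π/4 by ring, Real.sin_pi_div_four] at h
    nlinarith [Real.sq_sqrt (by norm_num : (0:ℝ) ≤ 2), Real.sqrt_nonneg 2]
  have hsc_le : Real.sin (θc/2) ≤ 1 := Real.sin_le_one _
  have hθcIoo : θc ∈ Ioo (0:ℝ) π := ⟨by linarith, hθc2⟩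
  -- sign claims
  have hpos : ∀ θ ∈ Ioo (0:ℝ) π, θ < θc → 0 < g (Real.sin (θ/2)) := by
    intro θ hθ hlt
    have hs0 : 0 < Real.sin (θ/2) := hsinpos θ hθ
    have hslt : Real.sin (θ/2) < Real.sin (θc/2) := hsinmono θ θc hθ.1 hlt (le_of_lt hθc2)
    rcases le_or_gt (Real.sin (θ/2)) (1/2) with h | h
    · exact g_pos_small hs0 h
    · have := g_anti ⟨le_of_lt h, le_of_lt (lt_of_lt_of_le hslt hsc_le)⟩
        ⟨le_of_lt hsc_half, hsc_le⟩ hslt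
      rw [hGθc] at this; exact this
  have hneg : ∀ θ ∈ Ioo (0:ℝ) π, θc < θ → g (Real.sin (θ/2)) < 0 := by
    intro θ hθ hlt
    have hslt : Real.sin (θc/2) < Real.sin (θ/2) := hsinmono θc θ hθcIoo.1 hlt (le_of_lt hθ.2)
    have := g_anti ⟨le_of_lt hsc_half, hsc_le⟩
      ⟨by linarith, Real.sin_le_one _⟩ hslt
    rw [hGθc] at this; exact this
  -- derivative formula
  have hderiv : ∀ θ ∈ Ioo (0:ℝ) π, deriv f θ = g (Real.sin (θ/2)) / (8 * (Real.sin (θ/2))^3) := by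
    intro θ hθ
    exact (f_hasDeriv θ (ne_of_gt (hsinpos θ hθ))).deriv
  have hdenpos : ∀ θ ∈ Ioo (0:ℝ) π, 0 < 8 * (Real.sin (θ/2))^3 := by
    intro θ hθ; have := hsinpos θ hθ; positivity
  refine ⟨θc, hθcIoo, ?_, ?_, ?_, ?_, ?_⟩
  · rw [hderiv θc hθcIoo, hGθc]; simp
  · -- θc > 3π/5
    by_contra h
    push_neg at h
    have h35 : (3*π/5 : ℝ) ∈ Ioo (0:ℝ) π := ⟨by linarith, by linarith⟩
    have hle : g (Real.sin ((3*π/5)/2)) ≤ 0 := by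
      rcases eq_or_lt_of_le h with heq | hlt
      · rw [← heq]; rw [hGθc]
      · exact le_of_lt (hneg _ h35 hlt)
    rw [show (3*π/5)/2 = π/2 - π/5 by ring, Real.sin_pi_div_two_sub,
      Real.cos_pi_div_five] at hle
    simp only [g] at hle
    have h2 : (Real.sqrt 5)^2 = 5 := Real.sq_sqrt (by norm_num)
    have ht : Real.sqrt 5 < 7/3 := by
      nlinarith [Real.sqrt_nonneg 5]
    have key : 2 - ((1 + Real.sqrt 5) / 4) ^ 2 + 8 * ((1 + Real.sqrt 5) / 4) ^ 3
        - 16 * ((1 + Real.sqrt 5) / 4) ^ 5 = (7 - 3*Real.sqrt 5)/8 := by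
      linear_combination ((-16*(Real.sqrt 5)^3 - 80*(Real.sqrt 5)^2 - 112*Real.sqrt 5 - 240)/1024) * h2
    rw [key] at hle
    linarith
  · intro θ hθ
    have hθ' : θ ∈ Ioo (0:ℝ) π := ⟨hθ.1, by linarith [hθ.2]⟩
    rw [hderiv θ hθ']
    exact div_pos (hpos θ hθ' hθ.2) (hdenpos θ hθ')
  · intro θ hθ
    have hθ' : θ ∈ Ioo (0:ℝ) π := ⟨by linarith [hθ.1], hθ.2⟩
    rw [hderiv θ hθ']
    exact div_neg_of_neg_of_pos (hneg θ hθ' hθ.1) (hdenpos θ hθ')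
  · intro θ hθ hd
    rcases lt_trichotomy θ θc with h | h | h
    · exfalso
      have hp : 0 < deriv f θ := by
        rw [hderiv θ hθ]; exact div_pos (hpos θ hθ h) (hdenpos θ hθ)
      rw [hd] at hp; exact lt_irrefl 0 hp
    · exact h
    · exfalso
      have hp : deriv f θ < 0 := by
        rw [hderiv θ hθ]; exact div_neg_of_neg_of_pos (hneg θ hθ h) (hdenpos θ hθ)
      rw [hd] at hp; exact lt_irrefl 0 hp
end

section
/- Let f(x) = sin(x)(1 - 1/(8 sin(x/2)^3)). There are no θ₁, θ₂' > 0 with θ₁ + θ₂' < 2π such that f(θ₁) = 0, f(θ₂') = 0, and f(θ₁ + θ₂') = 0. -/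
open Real Set

lemma sin_half_eq (x : ℝ) (h1 : 0 < x) (h2 : x < 2*π) (hs : Real.sin (x/2) = 1/2) :
    x = π/3 ∨ x = 5*π/3 := by
  have hy1 : 0 < x/2 := by linarith
  have hy2 : x/2 < π := by linarith
  by_cases hle : x/2 ≤ π/2
  · left
    have h6 : Real.sin (π/6) = 1/2 := Real.sin_pi_div_six
    have hpi := Real.pi_pos
    have := Real.injOn_sin (show x/2 ∈ Set.Icc (-(π/2)) (π/2) from ⟨by linarith, hle⟩)
      (show π/6 ∈ Set.Icc (-(π/2)) (π/2) from ⟨by linarith, by linarith⟩) (by rw [hs, h6])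
    linarith
  · right
    push_neg at hle
    have h6 : Real.sin (π/6) = 1/2 := Real.sin_pi_div_six
    have hpi := Real.pi_pos
    have hs' : Real.sin (π - x/2) = 1/2 := by rw [Real.sin_pi_sub]; exact hs
    have := Real.injOn_sin (show π - x/2 ∈ Set.Icc (-(π/2)) (π/2) from ⟨by linarith, by linarith⟩)
      (show π/6 ∈ Set.Icc (-(π/2)) (π/2) from ⟨by linarith, by linarith⟩) (by rw [hs', h6])
    linarith

lemma zero_iff (x : ℝ) (h1 : 0 < x) (h2 : x < 2*π) :
    f x = 0 ↔ x = π/3 ∨ x = π ∨ x = 5*π/3 := by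
  have hpi := Real.pi_pos
  have hs : 0 < Real.sin (x/2) :=
    Real.sin_pos_of_pos_of_lt_pi (by linarith) (by linarith)
  constructor
  · intro hf
    rcases mul_eq_zero.1 hf with h | h
    · -- sin x = 0, x ∈ (0, 2π) forces x = π
      right; left
      rw [Real.sin_eq_zero_iff] at h
      obtain ⟨n, hn⟩ := h
      have hn1 : (0:ℝ) < n * π := by rw [hn]; exact h1
      have hn2 : (n:ℝ) * π < 2 * π := by rw [hn]; exact h2
      have h0 : (0:ℝ) < (n:ℝ) := by
        by_contra hc; push_neg at hc
        nlinarith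
      have h2' : (n:ℝ) < 2 := by
        by_contra hc; push_neg at hc
        nlinarith
      have : n = 1 := by
        have : (0:ℤ) < n := by exact_mod_cast h0
        have : n < 2 := by exact_mod_cast h2'
        omega
      rw [this] at hn; push_cast at hn; linarith
    · -- 1 - 1/(8 s^3) = 0
      have hden : (8 * (Real.sin (x/2))^3) ≠ 0 := by positivity
      have hcube : 8 * (Real.sin (x/2))^3 = 1 := by
        field_simp at h
        linarith
      have hhalf : Real.sin (x/2) = 1/2 := by
        nlinarith [sq_nonneg (Real.sin (x/2) - 1/2), sq_nonneg (Real.sin (x/2) + 1/2)]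
      rcases sin_half_eq x h1 h2 hhalf with h | h
      · exact Or.inl h
      · exact Or.inr (Or.inr h)
  · intro hx
    have h6 : Real.sin (π/6) = 1/2 := Real.sin_pi_div_six
    rcases hx with h | h | h
    · subst h
      have : Real.sin (π/3/2) = 1/2 := by
        rw [show π/3/2 = π/6 by ring]; exact h6
      simp [f, this]; norm_num
    · subst h
      simp [f]
    · subst h
      have : Real.sin (5*π/3/2) = 1/2 := by
        rw [show 5*π/3/2 = π - π/6 by ring, Real.sin_pi_sub]; exact h6
      simp [f, this]; norm_num

theorem stmt8 : ¬ ∃ θ₁ θ₂' : ℝ, 0 < θ₁ ∧ 0 < θ₂' ∧ θ₁ + θ₂' < 2*π ∧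
    f θ₁ = 0 ∧ f θ₂' = 0 ∧ f (θ₁ + θ₂') = 0 := by
  rintro ⟨a, b, ha, hb, hab, hfa, hfb, hfab⟩
  have hpi := Real.pi_pos
  have h1 := (zero_iff a ha (by linarith)).1 hfa
  have h2 := (zero_iff b hb (by linarith)).1 hfb
  have h3 := (zero_iff (a+b) (by linarith) hab).1 hfab
  rcases h1 with h1 | h1 | h1 <;> rcases h2 with h2 | h2 | h2 <;>
    rcases h3 with h3 | h3 | h3 <;> linarith
end

section
/- Let f(x) = sin(x)(1 - 1/(8 sin(x/2)^3)). The only solutions x ∈ (0, π) of f(x) + f(2x) = 0 in (0, π) are exactly three: x = 2π/3, a root a with 0 < a < 5π/18, and a root b with 2π/3 < b < π, with 138π/180 < b < 139π/180. -/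
open Real Set

def pp (t : ℝ) : ℝ := -1 - 4*t - 8*t^2 - 8*t^3 - 4*t^4 + 1024*t^6 + 4096*t^7 + 1024*t^8 - 12288*t^9 - 9216*t^10 + 12288*t^11 + 11264*t^12 - 4096*t^13 - 4096*t^14
def ppD (t : ℝ) : ℝ := -4 - 16*t - 24*t^2 - 16*t^3 + 6144*t^5 + 28672*t^6 + 8192*t^7 - 110592*t^8 - 92160*t^9 + 135168*t^10 + 135168*t^11 - 53248*t^12 - 57344*t^13


lemma pp_hasDeriv (t : ℝ) : HasDerivAt pp (ppD t) t := by
  have H := ((((((((((((((hasDerivAt_const t (-1:ℝ)).sub ((hasDerivAt_id t).const_mul 4)).sub ((hasDerivAt_pow 2 t).const_mul 8)).sub ((hasDerivAt_pow 3 t).const_mul 8)).sub ((hasDerivAt_pow 4 t).const_mul 4)).add ((hasDerivAt_pow 6 t).const_mul 1024)).add ((hasDerivAt_pow 7 t).const_mul 4096)).add ((hasDerivAt_pow 8 t).const_mul 1024)).sub ((hasDerivAt_pow 9 t).const_mul 12288)).sub ((hasDerivAt_pow 10 t).const_mul 9216)).add ((hasDerivAt_pow 11 t).const_mul 12288)).add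 ((hasDerivAt_pow 12 t).const_mul 11264)).sub ((hasDerivAt_pow 13 t).const_mul 4096)).sub ((hasDerivAt_pow 14 t).const_mul 4096))
  refine (H : HasDerivAt pp _ t).congr_deriv ?_
  unfold ppD
  push_cast
  ring


lemma pp_neg1_seg0 (t : ℝ) (hlo : (0 : ℝ) ≤ t) (hhi : t ≤ (27/125 : ℝ)) : pp t < 0 := by
  have hrep : pp t = (-1 : ℝ) + (-4 : ℝ) * (t - (0 : ℝ)) + (-8 : ℝ) * (t - (0 : ℝ))^2 + (-8 : ℝ) * (t - (0 : ℝ))^3 + (-4 : ℝ) * (t - (0 : ℝ))^4 + (0 : ℝ) * (t - (0 : ℝ))^5 + (1024 : ℝ) * (t - (0 : ℝ))^6 + (4096 : ℝ) * (t - (0 : ℝ))^7 + (1024 : ℝ) * (t - (0 : ℝ))^8 + (-12288 : ℝ) * (t - (0 : ℝ))^9 + (-9216 : ℝ) * (t - (0 : ℝ))^10 + (12288 : ℝ) * (t - (0 : ℝ))^11 + (11264 : ℝ) * (t - (0 : ℝ))^12 + (-4096 : ℝ) * (t - (0 : ℝ))^13 + (-4096 : ℝ) * (t - (0 : ℝ))^14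 + (0 : ℝ) * (t - (0 : ℝ))^15 := by unfold pp; ring
  have h0 : (0:ℝ) ≤ t - (0 : ℝ) := by linarith
  have hw : t - (0 : ℝ) ≤ (27/125 : ℝ) := by linarith
  have o2 : (0:ℝ) ≤ (t - (0 : ℝ))^2 := pow_nonneg h0 2
  have o3 : (0:ℝ) ≤ (t - (0 : ℝ))^3 := pow_nonneg h0 3
  have o4 : (0:ℝ) ≤ (t - (0 : ℝ))^4 := pow_nonneg h0 4
  have e6 : (t - (0 : ℝ))^6 ≤ (387420489/3814697265625 : ℝ) := by calc (t - (0 : ℝ))^6 ≤ ((27/125 : ℝ))^6 := pow_le_pow_left₀ h0 hw 6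
    _ = (387420489/3814697265625 : ℝ) := by norm_num
  have e7 : (t - (0 : ℝ))^7 ≤ (10460353203/476837158203125 : ℝ) := by calc (t - (0 : ℝ))^7 ≤ ((27/125 : ℝ))^7 := pow_le_pow_left₀ h0 hw 7
    _ = (10460353203/476837158203125 : ℝ) := by norm_num
  have e8 : (t - (0 : ℝ))^8 ≤ (282429536481/59604644775390625 : ℝ) := by calc (t - (0 : ℝ))^8 ≤ ((27/125 : ℝ))^8 := pow_le_pow_left₀ h0 hw 8
    _ = (282429536481/59604644775390625 : ℝ) := by norm_num
  have o9 : (0:ℝ) ≤ (t - (0 : ℝ))^9 := pow_nonneg h0 9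
  have o10 : (0:ℝ) ≤ (t - (0 : ℝ))^10 := pow_nonneg h0 10
  have e11 : (t - (0 : ℝ))^11 ≤ (5559060566555523/116415321826934814453125 : ℝ) := by calc (t - (0 : ℝ))^11 ≤ ((27/125 : ℝ))^11 := pow_le_pow_left₀ h0 hw 11
    _ = (5559060566555523/116415321826934814453125 : ℝ) := by norm_num
  have e12 : (t - (0 : ℝ))^12 ≤ (150094635296999121/14551915228366851806640625 : ℝ) := by calc (t - (0 : ℝ))^12 ≤ ((27/125 : ℝ))^12 := pow_le_pow_left₀ h0 hw 12
    _ = (150094635296999121/14551915228366851806640625 : ℝ) := by norm_num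
  have o13 : (0:ℝ) ≤ (t - (0 : ℝ))^13 := pow_nonneg h0 13
  have o14 : (0:ℝ) ≤ (t - (0 : ℝ))^14 := pow_nonneg h0 14
  rw [hrep]
  linarith [h0, hw, o2, o3, o4, e6, e7, e8, o9, o10, e11, e12, o13, o14]

lemma pp_neg1_seg1 (t : ℝ) (hlo : (27/125 : ℝ) ≤ t) (hhi : t ≤ (13/50 : ℝ)) : pp t < 0 := by
  have hrep : pp t = (-486987950151718022042248289689/227373675443232059478759765625 : ℝ) + (-6074020852950784761178118348/1818989403545856475830078125 : ℝ) * (t - (27/125 : ℝ)) + (751674110554457772824981944/14551915228366851806640625 : ℝ) * (t - (27/125 : ℝ))^2 + (48508449730671865205573288/116415321826934814453125 : ℝ) * (t - (27/125 : ℝ))^3 + (1397301089506832022991196/931322574615478515625 : ℝ) * (t - (27/125 : ℝ))^4 + (16352495992226029418496/7450580596923828125 : ℝ) * (t - (27/125 : ℝ))^5 + (-151770013110616982528/59604644775390625 : ℝ) * (t - (27/125 : ℝ))^6 + (-6637330099988770816/476837158203125 : ℝ) * (t - (27/125 : ℝ))^7 + (-51006689846008832/3814697265625 : ℝ) * (t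 - (27/125 : ℝ))^8 + (429692046329856/30517578125 : ℝ) * (t - (27/125 : ℝ))^9 + (8284883825664/244140625 : ℝ) * (t - (27/125 : ℝ))^10 + (22564405248/1953125 : ℝ) * (t - (27/125 : ℝ))^11 + (-275436544/15625 : ℝ) * (t - (27/125 : ℝ))^12 + (-2060288/125 : ℝ) * (t - (27/125 : ℝ))^13 + (-4096 : ℝ) * (t - (27/125 : ℝ))^14 + (0 : ℝ) * (t - (27/125 : ℝ))^15 := by unfold pp; ring
  have h0 : (0:ℝ) ≤ t - (27/125 : ℝ) := by linarith
  have hw : t - (27/125 : ℝ) ≤ (11/250 : ℝ) := by linarith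
  have e2 : (t - (27/125 : ℝ))^2 ≤ (121/62500 : ℝ) := by calc (t - (27/125 : ℝ))^2 ≤ ((11/250 : ℝ))^2 := pow_le_pow_left₀ h0 hw 2
    _ = (121/62500 : ℝ) := by norm_num
  have e3 : (t - (27/125 : ℝ))^3 ≤ (1331/15625000 : ℝ) := by calc (t - (27/125 : ℝ))^3 ≤ ((11/250 : ℝ))^3 := pow_le_pow_left₀ h0 hw 3
    _ = (1331/15625000 : ℝ) := by norm_num
  have e4 : (t - (27/125 : ℝ))^4 ≤ (14641/3906250000 : ℝ) := by calc (t - (27/125 : ℝ))^4 ≤ ((11/250 : ℝ))^4 := pow_le_pow_left₀ h0 hw 4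
    _ = (14641/3906250000 : ℝ) := by norm_num
  have e5 : (t - (27/125 : ℝ))^5 ≤ (161051/976562500000 : ℝ) := by calc (t - (27/125 : ℝ))^5 ≤ ((11/250 : ℝ))^5 := pow_le_pow_left₀ h0 hw 5
    _ = (161051/976562500000 : ℝ) := by norm_num
  have o6 : (0:ℝ) ≤ (t - (27/125 : ℝ))^6 := pow_nonneg h0 6
  have o7 : (0:ℝ) ≤ (t - (27/125 : ℝ))^7 := pow_nonneg h0 7
  have o8 : (0:ℝ) ≤ (t - (27/125 : ℝ))^8 := pow_nonneg h0 8
  have e9 : (t - (27/125 : ℝ))^9 ≤ (2357947691/3814697265625000000000 : ℝ) := by calc (t - (27/125 : ℝ))^9 ≤ ((11/250 : ℝ))^9 := pow_le_pow_left₀ h0 hw 9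
    _ = (2357947691/3814697265625000000000 : ℝ) := by norm_num
  have e10 : (t - (27/125 : ℝ))^10 ≤ (25937424601/953674316406250000000000 : ℝ) := by calc (t - (27/125 : ℝ))^10 ≤ ((11/250 : ℝ))^10 := pow_le_pow_left₀ h0 hw 10
    _ = (25937424601/953674316406250000000000 : ℝ) := by norm_num
  have e11 : (t - (27/125 : ℝ))^11 ≤ (285311670611/238418579101562500000000000 : ℝ) := by calc (t - (27/125 : ℝ))^11 ≤ ((11/250 : ℝ))^11 := pow_le_pow_left₀ h0 hw 11
    _ = (285311670611/238418579101562500000000000 : ℝ) := by norm_num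
  have o12 : (0:ℝ) ≤ (t - (27/125 : ℝ))^12 := pow_nonneg h0 12
  have o13 : (0:ℝ) ≤ (t - (27/125 : ℝ))^13 := pow_nonneg h0 13
  have o14 : (0:ℝ) ≤ (t - (27/125 : ℝ))^14 := pow_nonneg h0 14
  rw [hrep]
  linarith [h0, hw, e2, e3, e4, e5, o6, o7, o8, e9, e10, e11, o12, o13, o14]

lemma pp_neg1_seg2 (t : ℝ) (hlo : (13/50 : ℝ) ≤ t) (hhi : t ≤ (67/250 : ℝ)) : pp t < 0 := by
  have hrep : pp t = (-319966848214120708189/149011611938476562500 : ℝ) + (6222094536875386654/1490116119384765625 : ℝ) * (t - (13/50 : ℝ)) + (7495920026043749929/59604644775390625 : ℝ) * (t - (13/50 : ℝ))^2 + (1709360980099584664/2384185791015625 : ℝ) * (t - (13/50 : ℝ))^3 + (177821034253847604/95367431640625 : ℝ) * (t - (13/50 : ℝ))^4 + (3436951287391232/3814697265625 : ℝ) * (t - (13/50 : ℝ))^5 + (-1133741581060208/152587890625 : ℝ) * (t - (13/50 : ℝ))^6 + (-105506127601408/6103515625 : ℝ) * (t - (13/50 : ℝ))^7 + (-1150601366528/244140625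 : ℝ) * (t - (13/50 : ℝ))^8 + (291658004992/9765625 : ℝ) * (t - (13/50 : ℝ))^9 + (14397334784/390625 : ℝ) * (t - (13/50 : ℝ))^10 + (-5789696/15625 : ℝ) * (t - (13/50 : ℝ))^11 + (-17360896/625 : ℝ) * (t - (13/50 : ℝ))^12 + (-475136/25 : ℝ) * (t - (13/50 : ℝ))^13 + (-4096 : ℝ) * (t - (13/50 : ℝ))^14 + (0 : ℝ) * (t - (13/50 : ℝ))^15 := by unfold pp; ring
  have h0 : (0:ℝ) ≤ t - (13/50 : ℝ) := by linarith
  have hw : t - (13/50 : ℝ) ≤ (1/125 : ℝ) := by linarith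
  have e2 : (t - (13/50 : ℝ))^2 ≤ (1/15625 : ℝ) := by calc (t - (13/50 : ℝ))^2 ≤ ((1/125 : ℝ))^2 := pow_le_pow_left₀ h0 hw 2
    _ = (1/15625 : ℝ) := by norm_num
  have e3 : (t - (13/50 : ℝ))^3 ≤ (1/1953125 : ℝ) := by calc (t - (13/50 : ℝ))^3 ≤ ((1/125 : ℝ))^3 := pow_le_pow_left₀ h0 hw 3
    _ = (1/1953125 : ℝ) := by norm_num
  have e4 : (t - (13/50 : ℝ))^4 ≤ (1/244140625 : ℝ) := by calc (t - (13/50 : ℝ))^4 ≤ ((1/125 : ℝ))^4 := pow_le_pow_left₀ h0 hw 4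
    _ = (1/244140625 : ℝ) := by norm_num
  have e5 : (t - (13/50 : ℝ))^5 ≤ (1/30517578125 : ℝ) := by calc (t - (13/50 : ℝ))^5 ≤ ((1/125 : ℝ))^5 := pow_le_pow_left₀ h0 hw 5
    _ = (1/30517578125 : ℝ) := by norm_num
  have o6 : (0:ℝ) ≤ (t - (13/50 : ℝ))^6 := pow_nonneg h0 6
  have o7 : (0:ℝ) ≤ (t - (13/50 : ℝ))^7 := pow_nonneg h0 7
  have o8 : (0:ℝ) ≤ (t - (13/50 : ℝ))^8 := pow_nonneg h0 8
  have e9 : (t - (13/50 : ℝ))^9 ≤ (1/7450580596923828125 : ℝ) := by calc (t - (13/50 : ℝ))^9 ≤ ((1/125 : ℝ))^9 := pow_le_pow_left₀ h0 hw 9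
    _ = (1/7450580596923828125 : ℝ) := by norm_num
  have e10 : (t - (13/50 : ℝ))^10 ≤ (1/931322574615478515625 : ℝ) := by calc (t - (13/50 : ℝ))^10 ≤ ((1/125 : ℝ))^10 := pow_le_pow_left₀ h0 hw 10
    _ = (1/931322574615478515625 : ℝ) := by norm_num
  have o11 : (0:ℝ) ≤ (t - (13/50 : ℝ))^11 := pow_nonneg h0 11
  have o12 : (0:ℝ) ≤ (t - (13/50 : ℝ))^12 := pow_nonneg h0 12
  have o13 : (0:ℝ) ≤ (t - (13/50 : ℝ))^13 := pow_nonneg h0 13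
  have o14 : (0:ℝ) ≤ (t - (13/50 : ℝ))^14 := pow_nonneg h0 14
  rw [hrep]
  linarith [h0, hw, e2, e3, e4, e5, o6, o7, o8, e9, e10, o11, o12, o13, o14]

lemma pp_neg1_seg3 (t : ℝ) (hlo : (67/250 : ℝ) ≤ t) (hhi : t ≤ (27/100 : ℝ)) : pp t < 0 := by
  have hrep : pp t = (-1914880271428370831989048862329/909494701772928237915039062500 : ℝ) + (11512819103332092482271758016/1818989403545856475830078125 : ℝ) * (t - (67/250 : ℝ)) + (2090932787525016888717101449/14551915228366851806640625 : ℝ) * (t - (67/250 : ℝ))^2 + (90469006933241736606981576/116415321826934814453125 : ℝ) * (t - (67/250 : ℝ))^3 + (1763164862916265398803204/931322574615478515625 : ℝ) * (t - (67/250 : ℝ))^4 + (3881602993022893194848/7450580596923828125 : ℝ) * (t - (67/250 : ℝ))^5 + (-500991407594499558768/59604644775390625 : ℝ) * (t - (67/250 : ℝ))^6 + (-8352600650667025152/476837158203125 : ℝ) * (t - (67/250 : ℝ))^7 + (-9370677244168448/3814697265625 : ℝ) * (t - (67/250 : ℝ))^8 + (1001277612100608/30517578125 : ℝ) * (t - (67/250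 : ℝ))^9 + (8961044385024/244140625 : ℝ) * (t - (67/250 : ℝ))^10 + (-6118774784/1953125 : ℝ) * (t - (67/250 : ℝ))^11 + (-465278976/15625 : ℝ) * (t - (67/250 : ℝ))^12 + (-2433024/125 : ℝ) * (t - (67/250 : ℝ))^13 + (-4096 : ℝ) * (t - (67/250 : ℝ))^14 + (0 : ℝ) * (t - (67/250 : ℝ))^15 := by unfold pp; ring
  have h0 : (0:ℝ) ≤ t - (67/250 : ℝ) := by linarith
  have hw : t - (67/250 : ℝ) ≤ (1/500 : ℝ) := by linarith
  have e2 : (t - (67/250 : ℝ))^2 ≤ (1/250000 : ℝ) := by calc (t - (67/250 : ℝ))^2 ≤ ((1/500 : ℝ))^2 := pow_le_pow_left₀ h0 hw 2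
    _ = (1/250000 : ℝ) := by norm_num
  have e3 : (t - (67/250 : ℝ))^3 ≤ (1/125000000 : ℝ) := by calc (t - (67/250 : ℝ))^3 ≤ ((1/500 : ℝ))^3 := pow_le_pow_left₀ h0 hw 3
    _ = (1/125000000 : ℝ) := by norm_num
  have e4 : (t - (67/250 : ℝ))^4 ≤ (1/62500000000 : ℝ) := by calc (t - (67/250 : ℝ))^4 ≤ ((1/500 : ℝ))^4 := pow_le_pow_left₀ h0 hw 4
    _ = (1/62500000000 : ℝ) := by norm_num
  have e5 : (t - (67/250 : ℝ))^5 ≤ (1/31250000000000 : ℝ) := by calc (t - (67/250 : ℝ))^5 ≤ ((1/500 : ℝ))^5 := pow_le_pow_left₀ h0 hw 5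
    _ = (1/31250000000000 : ℝ) := by norm_num
  have o6 : (0:ℝ) ≤ (t - (67/250 : ℝ))^6 := pow_nonneg h0 6
  have o7 : (0:ℝ) ≤ (t - (67/250 : ℝ))^7 := pow_nonneg h0 7
  have o8 : (0:ℝ) ≤ (t - (67/250 : ℝ))^8 := pow_nonneg h0 8
  have e9 : (t - (67/250 : ℝ))^9 ≤ (1/1953125000000000000000000 : ℝ) := by calc (t - (67/250 : ℝ))^9 ≤ ((1/500 : ℝ))^9 := pow_le_pow_left₀ h0 hw 9
    _ = (1/1953125000000000000000000 : ℝ) := by norm_num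
  have e10 : (t - (67/250 : ℝ))^10 ≤ (1/976562500000000000000000000 : ℝ) := by calc (t - (67/250 : ℝ))^10 ≤ ((1/500 : ℝ))^10 := pow_le_pow_left₀ h0 hw 10
    _ = (1/976562500000000000000000000 : ℝ) := by norm_num
  have o11 : (0:ℝ) ≤ (t - (67/250 : ℝ))^11 := pow_nonneg h0 11
  have o12 : (0:ℝ) ≤ (t - (67/250 : ℝ))^12 := pow_nonneg h0 12
  have o13 : (0:ℝ) ≤ (t - (67/250 : ℝ))^13 := pow_nonneg h0 13
  have o14 : (0:ℝ) ≤ (t - (67/250 : ℝ))^14 := pow_nonneg h0 14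
  rw [hrep]
  linarith [h0, hw, e2, e3, e4, e5, o6, o7, o8, e9, e10, o11, o12, o13, o14]

lemma pp_neg1 (t : ℝ) (hlo : (0 : ℝ) ≤ t) (hhi : t ≤ (27/100 : ℝ)) : pp t < 0 := by
  rcases le_total t (27/125 : ℝ) with hc0|hc0
  · exact pp_neg1_seg0 t (by linarith) hc0
  rcases le_total t (13/50 : ℝ) with hc1|hc1
  · exact pp_neg1_seg1 t (by linarith) hc1
  rcases le_total t (67/250 : ℝ) with hc2|hc2
  · exact pp_neg1_seg2 t (by linarith) hc2
  exact pp_neg1_seg3 t (by linarith) hhi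

lemma pp_pos1_seg0 (t : ℝ) (hlo : (7/10 : ℝ) ≤ t) (hhi : t ≤ (37/50 : ℝ)) : 0 < pp t := by
  have hrep : pp t = (1968385064231/24414062500 : ℝ) + (185435481036/1220703125 : ℝ) * (t - (7/10 : ℝ)) + (-503264264231/244140625 : ℝ) * (t - (7/10 : ℝ))^2 + (-348596156184/48828125 : ℝ) * (t - (7/10 : ℝ))^3 + (71966804804/9765625 : ℝ) * (t - (7/10 : ℝ))^4 + (140294234528/1953125 : ℝ) * (t - (7/10 : ℝ))^5 + (41841481872/390625 : ℝ) * (t - (7/10 : ℝ))^6 + (-7648058112/78125 : ℝ) * (t - (7/10 : ℝ))^7 + (-9039834368/15625 : ℝ) * (t - (7/10 : ℝ))^8 + (-3053217792/3125 : ℝ) * (t - (7/10 : ℝ))^9 + (-585351936/625 : ℝ) * (t - (7/10 : ℝ))^10 + (-70129664/125 : ℝ) * (t - (7/10 : ℝ))^11 + (-5216256/25 : ℝ) * (t - (7/10 : ℝ))^12 + (-221184/5 : ℝ) * (t - (7/10 : ℝ))^13 + (-4096 : ℝ) * (t - (7/10 : ℝ))^14 + (0 : ℝ) * (t - (7/10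 : ℝ))^15 := by unfold pp; ring
  have h0 : (0:ℝ) ≤ t - (7/10 : ℝ) := by linarith
  have hw : t - (7/10 : ℝ) ≤ (1/25 : ℝ) := by linarith
  have e2 : (t - (7/10 : ℝ))^2 ≤ (1/625 : ℝ) := by calc (t - (7/10 : ℝ))^2 ≤ ((1/25 : ℝ))^2 := pow_le_pow_left₀ h0 hw 2
    _ = (1/625 : ℝ) := by norm_num
  have e3 : (t - (7/10 : ℝ))^3 ≤ (1/15625 : ℝ) := by calc (t - (7/10 : ℝ))^3 ≤ ((1/25 : ℝ))^3 := pow_le_pow_left₀ h0 hw 3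
    _ = (1/15625 : ℝ) := by norm_num
  have o4 : (0:ℝ) ≤ (t - (7/10 : ℝ))^4 := pow_nonneg h0 4
  have o5 : (0:ℝ) ≤ (t - (7/10 : ℝ))^5 := pow_nonneg h0 5
  have o6 : (0:ℝ) ≤ (t - (7/10 : ℝ))^6 := pow_nonneg h0 6
  have e7 : (t - (7/10 : ℝ))^7 ≤ (1/6103515625 : ℝ) := by calc (t - (7/10 : ℝ))^7 ≤ ((1/25 : ℝ))^7 := pow_le_pow_left₀ h0 hw 7
    _ = (1/6103515625 : ℝ) := by norm_num
  have e8 : (t - (7/10 : ℝ))^8 ≤ (1/152587890625 : ℝ) := by calc (t - (7/10 : ℝ))^8 ≤ ((1/25 : ℝ))^8 := pow_le_pow_left₀ h0 hw 8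
    _ = (1/152587890625 : ℝ) := by norm_num
  have e9 : (t - (7/10 : ℝ))^9 ≤ (1/3814697265625 : ℝ) := by calc (t - (7/10 : ℝ))^9 ≤ ((1/25 : ℝ))^9 := pow_le_pow_left₀ h0 hw 9
    _ = (1/3814697265625 : ℝ) := by norm_num
  have e10 : (t - (7/10 : ℝ))^10 ≤ (1/95367431640625 : ℝ) := by calc (t - (7/10 : ℝ))^10 ≤ ((1/25 : ℝ))^10 := pow_le_pow_left₀ h0 hw 10
    _ = (1/95367431640625 : ℝ) := by norm_num
  have e11 : (t - (7/10 : ℝ))^11 ≤ (1/2384185791015625 : ℝ) := by calc (t - (7/10 : ℝ))^11 ≤ ((1/25 : ℝ))^11 := pow_le_pow_left₀ h0 hw 11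
    _ = (1/2384185791015625 : ℝ) := by norm_num
  have e12 : (t - (7/10 : ℝ))^12 ≤ (1/59604644775390625 : ℝ) := by calc (t - (7/10 : ℝ))^12 ≤ ((1/25 : ℝ))^12 := pow_le_pow_left₀ h0 hw 12
    _ = (1/59604644775390625 : ℝ) := by norm_num
  have e13 : (t - (7/10 : ℝ))^13 ≤ (1/1490116119384765625 : ℝ) := by calc (t - (7/10 : ℝ))^13 ≤ ((1/25 : ℝ))^13 := pow_le_pow_left₀ h0 hw 13
    _ = (1/1490116119384765625 : ℝ) := by norm_num
  have e14 : (t - (7/10 : ℝ))^14 ≤ (1/37252902984619140625 : ℝ) := by calc (t - (7/10 : ℝ))^14 ≤ ((1/25 : ℝ))^14 := pow_le_pow_left₀ h0 hw 14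
    _ = (1/37252902984619140625 : ℝ) := by norm_num
  rw [hrep]
  linarith [h0, hw, e2, e3, o4, o5, o6, e7, e8, e9, e10, e11, e12, e13, e14]

lemma pp_pos1_seg1 (t : ℝ) (hlo : (37/50 : ℝ) ≤ t) (hhi : t ≤ (187/250 : ℝ)) : 0 < pp t := by
  have hrep : pp t = (12363931120167187534211/149011611938476562500 : ℝ) + (-66162794867962505354/1490116119384765625 : ℝ) * (t - (37/50 : ℝ)) + (-166745913369319681271/59604644775390625 : ℝ) * (t - (37/50 : ℝ))^2 + (-11172754391234737064/2384185791015625 : ℝ) * (t - (37/50 : ℝ))^3 + (2285944677188471604/95367431640625 : ℝ) * (t - (37/50 : ℝ))^4 + (350322147400995968/3814697265625 : ℝ) * (t - (37/50 : ℝ))^5 + (7324400034581392/152587890625 : ℝ) * (t - (37/50 : ℝ))^6 + (-2117870275124992/6103515625 : ℝ) * (t - (37/50 : ℝ))^7 + (-245094596707328/244140625 : ℝ) * (t - (37/50 : ℝ))^8 + (-13711384980992/9765625 : ℝ) * (t - (37/50 : ℝ))^9 + (-471200463616/390625 : ℝ) * (t - (37/50 : ℝ))^10 + (-10418837504/15625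 : ℝ) * (t - (37/50 : ℝ))^11 + (-145156096/625 : ℝ) * (t - (37/50 : ℝ))^12 + (-1163264/25 : ℝ) * (t - (37/50 : ℝ))^13 + (-4096 : ℝ) * (t - (37/50 : ℝ))^14 + (0 : ℝ) * (t - (37/50 : ℝ))^15 := by unfold pp; ring
  have h0 : (0:ℝ) ≤ t - (37/50 : ℝ) := by linarith
  have hw : t - (37/50 : ℝ) ≤ (1/125 : ℝ) := by linarith
  have e2 : (t - (37/50 : ℝ))^2 ≤ (1/15625 : ℝ) := by calc (t - (37/50 : ℝ))^2 ≤ ((1/125 : ℝ))^2 := pow_le_pow_left₀ h0 hw 2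
    _ = (1/15625 : ℝ) := by norm_num
  have e3 : (t - (37/50 : ℝ))^3 ≤ (1/1953125 : ℝ) := by calc (t - (37/50 : ℝ))^3 ≤ ((1/125 : ℝ))^3 := pow_le_pow_left₀ h0 hw 3
    _ = (1/1953125 : ℝ) := by norm_num
  have o4 : (0:ℝ) ≤ (t - (37/50 : ℝ))^4 := pow_nonneg h0 4
  have o5 : (0:ℝ) ≤ (t - (37/50 : ℝ))^5 := pow_nonneg h0 5
  have o6 : (0:ℝ) ≤ (t - (37/50 : ℝ))^6 := pow_nonneg h0 6
  have e7 : (t - (37/50 : ℝ))^7 ≤ (1/476837158203125 : ℝ) := by calc (t - (37/50 : ℝ))^7 ≤ ((1/125 : ℝ))^7 := pow_le_pow_left₀ h0 hw 7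
    _ = (1/476837158203125 : ℝ) := by norm_num
  have e8 : (t - (37/50 : ℝ))^8 ≤ (1/59604644775390625 : ℝ) := by calc (t - (37/50 : ℝ))^8 ≤ ((1/125 : ℝ))^8 := pow_le_pow_left₀ h0 hw 8
    _ = (1/59604644775390625 : ℝ) := by norm_num
  have e9 : (t - (37/50 : ℝ))^9 ≤ (1/7450580596923828125 : ℝ) := by calc (t - (37/50 : ℝ))^9 ≤ ((1/125 : ℝ))^9 := pow_le_pow_left₀ h0 hw 9
    _ = (1/7450580596923828125 : ℝ) := by norm_num
  have e10 : (t - (37/50 : ℝ))^10 ≤ (1/931322574615478515625 : ℝ) := by calc (t - (37/50 : ℝ))^10 ≤ ((1/125 : ℝ))^10 := pow_le_pow_left₀ h0 hw 10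
    _ = (1/931322574615478515625 : ℝ) := by norm_num
  have e11 : (t - (37/50 : ℝ))^11 ≤ (1/116415321826934814453125 : ℝ) := by calc (t - (37/50 : ℝ))^11 ≤ ((1/125 : ℝ))^11 := pow_le_pow_left₀ h0 hw 11
    _ = (1/116415321826934814453125 : ℝ) := by norm_num
  have e12 : (t - (37/50 : ℝ))^12 ≤ (1/14551915228366851806640625 : ℝ) := by calc (t - (37/50 : ℝ))^12 ≤ ((1/125 : ℝ))^12 := pow_le_pow_left₀ h0 hw 12
    _ = (1/14551915228366851806640625 : ℝ) := by norm_num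
  have e13 : (t - (37/50 : ℝ))^13 ≤ (1/1818989403545856475830078125 : ℝ) := by calc (t - (37/50 : ℝ))^13 ≤ ((1/125 : ℝ))^13 := pow_le_pow_left₀ h0 hw 13
    _ = (1/1818989403545856475830078125 : ℝ) := by norm_num
  have e14 : (t - (37/50 : ℝ))^14 ≤ (1/227373675443232059478759765625 : ℝ) := by calc (t - (37/50 : ℝ))^14 ≤ ((1/125 : ℝ))^14 := pow_le_pow_left₀ h0 hw 14
    _ = (1/227373675443232059478759765625 : ℝ) := by norm_num
  rw [hrep]
  linarith [h0, hw, e2, e3, o4, o5, o6, e7, e8, e9, e10, e11, e12, e13, e14]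

lemma pp_pos1_seg2 (t : ℝ) (hlo : (187/250 : ℝ) ≤ t) (hhi : t ≤ (3/4 : ℝ)) : 0 < pp t := by
  have hrep : pp t = (74975458314303973121042518151111/909494701772928237915039062500 : ℝ) + (-163727935604447199025161191304/1818989403545856475830078125 : ℝ) * (t - (187/250 : ℝ)) + (-42205261816848859790787728471/14551915228366851806640625 : ℝ) * (t - (187/250 : ℝ))^2 + (-449356491884238048687481464/116415321826934814453125 : ℝ) * (t - (187/250 : ℝ))^3 + (25781645030450976429865604/931322574615478515625 : ℝ) * (t - (187/250 : ℝ))^4 + (697694944354895800019168/7450580596923828125 : ℝ) * (t - (187/250 : ℝ))^5 + (1591992882070595470992/59604644775390625 : ℝ) * (t - (187/250 : ℝ))^6 + (-197673743338821403392/476837158203125 : ℝ) * (t - (187/250 : ℝ))^7 + (-4228704981509712128/3814697265625 : ℝ) * (t - (187/250 : ℝ))^8 + (-45865512996436992/30517578125 : ℝ) * (t - (187/250 : ℝ))^9 + (-309067366454016/244140625 : ℝ) * (t - (187/250 : ℝ))^10 + (-1346356680704/1953125 : ℝ) * (t - (187/250 : ℝ))^11 + (-3704887296/15625 : ℝ)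 * (t - (187/250 : ℝ))^12 + (-5873664/125 : ℝ) * (t - (187/250 : ℝ))^13 + (-4096 : ℝ) * (t - (187/250 : ℝ))^14 + (0 : ℝ) * (t - (187/250 : ℝ))^15 := by unfold pp; ring
  have h0 : (0:ℝ) ≤ t - (187/250 : ℝ) := by linarith
  have hw : t - (187/250 : ℝ) ≤ (1/500 : ℝ) := by linarith
  have e2 : (t - (187/250 : ℝ))^2 ≤ (1/250000 : ℝ) := by calc (t - (187/250 : ℝ))^2 ≤ ((1/500 : ℝ))^2 := pow_le_pow_left₀ h0 hw 2
    _ = (1/250000 : ℝ) := by norm_num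
  have e3 : (t - (187/250 : ℝ))^3 ≤ (1/125000000 : ℝ) := by calc (t - (187/250 : ℝ))^3 ≤ ((1/500 : ℝ))^3 := pow_le_pow_left₀ h0 hw 3
    _ = (1/125000000 : ℝ) := by norm_num
  have o4 : (0:ℝ) ≤ (t - (187/250 : ℝ))^4 := pow_nonneg h0 4
  have o5 : (0:ℝ) ≤ (t - (187/250 : ℝ))^5 := pow_nonneg h0 5
  have o6 : (0:ℝ) ≤ (t - (187/250 : ℝ))^6 := pow_nonneg h0 6
  have e7 : (t - (187/250 : ℝ))^7 ≤ (1/7812500000000000000 : ℝ) := by calc (t - (187/250 : ℝ))^7 ≤ ((1/500 : ℝ))^7 := pow_le_pow_left₀ h0 hw 7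
    _ = (1/7812500000000000000 : ℝ) := by norm_num
  have e8 : (t - (187/250 : ℝ))^8 ≤ (1/3906250000000000000000 : ℝ) := by calc (t - (187/250 : ℝ))^8 ≤ ((1/500 : ℝ))^8 := pow_le_pow_left₀ h0 hw 8
    _ = (1/3906250000000000000000 : ℝ) := by norm_num
  have e9 : (t - (187/250 : ℝ))^9 ≤ (1/1953125000000000000000000 : ℝ) := by calc (t - (187/250 : ℝ))^9 ≤ ((1/500 : ℝ))^9 := pow_le_pow_left₀ h0 hw 9
    _ = (1/1953125000000000000000000 : ℝ) := by norm_num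
  have e10 : (t - (187/250 : ℝ))^10 ≤ (1/976562500000000000000000000 : ℝ) := by calc (t - (187/250 : ℝ))^10 ≤ ((1/500 : ℝ))^10 := pow_le_pow_left₀ h0 hw 10
    _ = (1/976562500000000000000000000 : ℝ) := by norm_num
  have e11 : (t - (187/250 : ℝ))^11 ≤ (1/488281250000000000000000000000 : ℝ) := by calc (t - (187/250 : ℝ))^11 ≤ ((1/500 : ℝ))^11 := pow_le_pow_left₀ h0 hw 11
    _ = (1/488281250000000000000000000000 : ℝ) := by norm_num
  have e12 : (t - (187/250 : ℝ))^12 ≤ (1/244140625000000000000000000000000 : ℝ) := by calc (t - (187/250 : ℝ))^12 ≤ ((1/500 : ℝ))^12 := pow_le_pow_left₀ h0 hw 12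
    _ = (1/244140625000000000000000000000000 : ℝ) := by norm_num
  have e13 : (t - (187/250 : ℝ))^13 ≤ (1/122070312500000000000000000000000000 : ℝ) := by calc (t - (187/250 : ℝ))^13 ≤ ((1/500 : ℝ))^13 := pow_le_pow_left₀ h0 hw 13
    _ = (1/122070312500000000000000000000000000 : ℝ) := by norm_num
  have e14 : (t - (187/250 : ℝ))^14 ≤ (1/61035156250000000000000000000000000000 : ℝ) := by calc (t - (187/250 : ℝ))^14 ≤ ((1/500 : ℝ))^14 := pow_le_pow_left₀ h0 hw 14
    _ = (1/61035156250000000000000000000000000000 : ℝ) := by norm_num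
  rw [hrep]
  linarith [h0, hw, e2, e3, o4, o5, o6, e7, e8, e9, e10, e11, e12, e13, e14]

lemma pp_pos1 (t : ℝ) (hlo : (7/10 : ℝ) ≤ t) (hhi : t ≤ (3/4 : ℝ)) : 0 < pp t := by
  rcases le_total t (37/50 : ℝ) with hc0|hc0
  · exact pp_pos1_seg0 t (by linarith) hc0
  rcases le_total t (187/250 : ℝ) with hc1|hc1
  · exact pp_pos1_seg1 t (by linarith) hc1
  exact pp_pos1_seg2 t (by linarith) hhi

lemma ppD_pos1_seg0 (t : ℝ) (hlo : (27/100 : ℝ) ≤ t) (hhi : t ≤ (79/200 : ℝ)) : 0 < ppD t := by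
  have hrep : ppD t = (84391803718983812532481/12207031250000000000000 : ℝ) + (36229497124933357935589/122070312500000000000 : ℝ) * (t - (27/100 : ℝ)) + (1450722303867849883671/610351562500000000 : ℝ) * (t - (27/100 : ℝ))^2 + (46335069177664298351/6103515625000000 : ℝ) * (t - (27/100 : ℝ))^3 + (51104078052645663/24414062500000 : ℝ) * (t - (27/100 : ℝ))^4 + (-63359820090591729/1220703125000 : ℝ) * (t - (27/100 : ℝ))^5 + (-749868881378918/6103515625 : ℝ) * (t - (27/100 : ℝ))^6 + (-3631419574936/244140625 : ℝ) * (t - (27/100 : ℝ))^7 + (2948133840696/9765625 : ℝ) * (t - (27/100 : ℝ))^8 + (28615320288/78125 : ℝ) * (t - (27/100 : ℝ))^9 + (-662331648/15625 : ℝ) * (t - (27/100 : ℝ))^10 + (-227140608/625 : ℝ) * (t - (27/100 : ℝ))^11 + (-6363136/25 : ℝ) * (t - (27/100 : ℝ))^12 + (-57344 : ℝ) * (t - (27/100 : ℝ))^13 + (0 : ℝ) * (t - (27/100 : ℝ))^14 := by unfold ppD; ring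
  have h0 : (0:ℝ) ≤ t - (27/100 : ℝ) := by linarith
  have hw : t - (27/100 : ℝ) ≤ (1/8 : ℝ) := by linarith
  have o2 : (0:ℝ) ≤ (t - (27/100 : ℝ))^2 := pow_nonneg h0 2
  have o3 : (0:ℝ) ≤ (t - (27/100 : ℝ))^3 := pow_nonneg h0 3
  have o4 : (0:ℝ) ≤ (t - (27/100 : ℝ))^4 := pow_nonneg h0 4
  have e5 : (t - (27/100 : ℝ))^5 ≤ (1/32768 : ℝ) := by calc (t - (27/100 : ℝ))^5 ≤ ((1/8 : ℝ))^5 := pow_le_pow_left₀ h0 hw 5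
    _ = (1/32768 : ℝ) := by norm_num
  have e6 : (t - (27/100 : ℝ))^6 ≤ (1/262144 : ℝ) := by calc (t - (27/100 : ℝ))^6 ≤ ((1/8 : ℝ))^6 := pow_le_pow_left₀ h0 hw 6
    _ = (1/262144 : ℝ) := by norm_num
  have e7 : (t - (27/100 : ℝ))^7 ≤ (1/2097152 : ℝ) := by calc (t - (27/100 : ℝ))^7 ≤ ((1/8 : ℝ))^7 := pow_le_pow_left₀ h0 hw 7
    _ = (1/2097152 : ℝ) := by norm_num
  have o8 : (0:ℝ) ≤ (t - (27/100 : ℝ))^8 := pow_nonneg h0 8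
  have o9 : (0:ℝ) ≤ (t - (27/100 : ℝ))^9 := pow_nonneg h0 9
  have e10 : (t - (27/100 : ℝ))^10 ≤ (1/1073741824 : ℝ) := by calc (t - (27/100 : ℝ))^10 ≤ ((1/8 : ℝ))^10 := pow_le_pow_left₀ h0 hw 10
    _ = (1/1073741824 : ℝ) := by norm_num
  have e11 : (t - (27/100 : ℝ))^11 ≤ (1/8589934592 : ℝ) := by calc (t - (27/100 : ℝ))^11 ≤ ((1/8 : ℝ))^11 := pow_le_pow_left₀ h0 hw 11
    _ = (1/8589934592 : ℝ) := by norm_num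
  have e12 : (t - (27/100 : ℝ))^12 ≤ (1/68719476736 : ℝ) := by calc (t - (27/100 : ℝ))^12 ≤ ((1/8 : ℝ))^12 := pow_le_pow_left₀ h0 hw 12
    _ = (1/68719476736 : ℝ) := by norm_num
  have e13 : (t - (27/100 : ℝ))^13 ≤ (1/549755813888 : ℝ) := by calc (t - (27/100 : ℝ))^13 ≤ ((1/8 : ℝ))^13 := pow_le_pow_left₀ h0 hw 13
    _ = (1/549755813888 : ℝ) := by norm_num
  rw [hrep]
  linarith [h0, hw, o2, o3, o4, e5, e6, e7, o8, o9, e10, e11, e12, e13]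

lemma ppD_pos1_seg1 (t : ℝ) (hlo : (79/200 : ℝ) ≤ t) (hhi : t ≤ (537/1000 : ℝ)) : 0 < ppD t := by
  have hrep : ppD t = (9445001669964718175376329827/100000000000000000000000000 : ℝ) + (589151156066905495311036469/500000000000000000000000 : ℝ) * (t - (79/200 : ℝ)) + (4981215972990707701343133/1250000000000000000000 : ℝ) * (t - (79/200 : ℝ))^2 + (-23570684391348367215201/6250000000000000000 : ℝ) * (t - (79/200 : ℝ))^3 + (-671126032034465298019/12500000000000000 : ℝ) * (t - (79/200 : ℝ))^4 + (-33034221554798194449/312500000000000 : ℝ) * (t - (79/200 : ℝ))^5 + (18770987047378223/390625000000 : ℝ) * (t - (79/200 : ℝ))^6 + (873638404417837/1953125000 : ℝ) * (t - (79/200 : ℝ))^7 + (20859908877909/39062500 : ℝ) * (t - (79/200 : ℝ))^8 + (-9250403762/78125 : ℝ) * (t - (79/200 : ℝ))^9 + (-13072030048/15625 : ℝ) * (t - (79/200 : ℝ))^10 + (-509438208/625 : ℝ) * (t - (79/200 : ℝ))^11 + (-8692736/25 : ℝ) * (t - (79/200 : ℝ))^12 + (-57344 : ℝ) * (t - (79/200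 : ℝ))^13 + (0 : ℝ) * (t - (79/200 : ℝ))^14 := by unfold ppD; ring
  have h0 : (0:ℝ) ≤ t - (79/200 : ℝ) := by linarith
  have hw : t - (79/200 : ℝ) ≤ (71/500 : ℝ) := by linarith
  have o2 : (0:ℝ) ≤ (t - (79/200 : ℝ))^2 := pow_nonneg h0 2
  have e3 : (t - (79/200 : ℝ))^3 ≤ (357911/125000000 : ℝ) := by calc (t - (79/200 : ℝ))^3 ≤ ((71/500 : ℝ))^3 := pow_le_pow_left₀ h0 hw 3
    _ = (357911/125000000 : ℝ) := by norm_num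
  have e4 : (t - (79/200 : ℝ))^4 ≤ (25411681/62500000000 : ℝ) := by calc (t - (79/200 : ℝ))^4 ≤ ((71/500 : ℝ))^4 := pow_le_pow_left₀ h0 hw 4
    _ = (25411681/62500000000 : ℝ) := by norm_num
  have e5 : (t - (79/200 : ℝ))^5 ≤ (1804229351/31250000000000 : ℝ) := by calc (t - (79/200 : ℝ))^5 ≤ ((71/500 : ℝ))^5 := pow_le_pow_left₀ h0 hw 5
    _ = (1804229351/31250000000000 : ℝ) := by norm_num
  have o6 : (0:ℝ) ≤ (t - (79/200 : ℝ))^6 := pow_nonneg h0 6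
  have o7 : (0:ℝ) ≤ (t - (79/200 : ℝ))^7 := pow_nonneg h0 7
  have o8 : (0:ℝ) ≤ (t - (79/200 : ℝ))^8 := pow_nonneg h0 8
  have e9 : (t - (79/200 : ℝ))^9 ≤ (45848500718449031/1953125000000000000000000 : ℝ) := by calc (t - (79/200 : ℝ))^9 ≤ ((71/500 : ℝ))^9 := pow_le_pow_left₀ h0 hw 9
    _ = (45848500718449031/1953125000000000000000000 : ℝ) := by norm_num
  have e10 : (t - (79/200 : ℝ))^10 ≤ (3255243551009881201/976562500000000000000000000 : ℝ) := by calc (t - (79/200 : ℝ))^10 ≤ ((71/500 : ℝ))^10 := pow_le_pow_left₀ h0 hw 10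
    _ = (3255243551009881201/976562500000000000000000000 : ℝ) := by norm_num
  have e11 : (t - (79/200 : ℝ))^11 ≤ (231122292121701565271/488281250000000000000000000000 : ℝ) := by calc (t - (79/200 : ℝ))^11 ≤ ((71/500 : ℝ))^11 := pow_le_pow_left₀ h0 hw 11
    _ = (231122292121701565271/488281250000000000000000000000 : ℝ) := by norm_num
  have e12 : (t - (79/200 : ℝ))^12 ≤ (16409682740640811134241/244140625000000000000000000000000 : ℝ) := by calc (t - (79/200 : ℝ))^12 ≤ ((71/500 : ℝ))^12 := pow_le_pow_left₀ h0 hw 12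
    _ = (16409682740640811134241/244140625000000000000000000000000 : ℝ) := by norm_num
  have e13 : (t - (79/200 : ℝ))^13 ≤ (1165087474585497590531111/122070312500000000000000000000000000 : ℝ) := by calc (t - (79/200 : ℝ))^13 ≤ ((71/500 : ℝ))^13 := pow_le_pow_left₀ h0 hw 13
    _ = (1165087474585497590531111/122070312500000000000000000000000000 : ℝ) := by norm_num
  rw [hrep]
  linarith [h0, hw, o2, e3, e4, e5, o6, o7, o8, e9, e10, e11, e12, e13]

lemma ppD_pos1_seg2 (t : ℝ) (hlo : (537/1000 : ℝ) ≤ t) (hhi : t ≤ (327/500 : ℝ)) : 0 < ppD t := by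
  have hrep : ppD t = (37156706228544165531609606200179250221/122070312500000000000000000000000000 : ℝ) + (158565061385340931745747137358077429/122070312500000000000000000000000 : ℝ) * (t - (537/1000 : ℝ)) + (-378317000891617674621094629076749/61035156250000000000000000000 : ℝ) * (t - (537/1000 : ℝ))^2 + (-2744219088320964802763348206849/61035156250000000000000000 : ℝ) * (t - (537/1000 : ℝ))^3 + (-1387419055942642483522180077/24414062500000000000000 : ℝ) * (t - (537/1000 : ℝ))^4 + (23023415565767676432153711/122070312500000000000 : ℝ) * (t - (537/1000 : ℝ))^5 + (20439801795889996561601/30517578125000000 : ℝ) * (t - (537/1000 : ℝ))^6 + (16920948187824821773/30517578125000 : ℝ) * (t - (537/1000 : ℝ))^7 + (-102021585828848613/122070312500 : ℝ) * (t - (537/1000 : ℝ))^8 + (-119436302198322/48828125 : ℝ) * (t - (537/1000 : ℝ))^9 + (-5116205044896/1953125 : ℝ) * (t - (537/1000 : ℝ))^10 + (-23402940672/15625 : ℝ) * (t - (537/1000 : ℝ))^11 + (-56695808/125 : ℝ) * (t - (537/1000 : ℝ))^12 + (-57344 : ℝ) * (t - (537/1000 : ℝ))^13 + (0 : ℝ)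 * (t - (537/1000 : ℝ))^14 := by unfold ppD; ring
  have h0 : (0:ℝ) ≤ t - (537/1000 : ℝ) := by linarith
  have hw : t - (537/1000 : ℝ) ≤ (117/1000 : ℝ) := by linarith
  have e2 : (t - (537/1000 : ℝ))^2 ≤ (13689/1000000 : ℝ) := by calc (t - (537/1000 : ℝ))^2 ≤ ((117/1000 : ℝ))^2 := pow_le_pow_left₀ h0 hw 2
    _ = (13689/1000000 : ℝ) := by norm_num
  have e3 : (t - (537/1000 : ℝ))^3 ≤ (1601613/1000000000 : ℝ) := by calc (t - (537/1000 : ℝ))^3 ≤ ((117/1000 : ℝ))^3 := pow_le_pow_left₀ h0 hw 3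
    _ = (1601613/1000000000 : ℝ) := by norm_num
  have e4 : (t - (537/1000 : ℝ))^4 ≤ (187388721/1000000000000 : ℝ) := by calc (t - (537/1000 : ℝ))^4 ≤ ((117/1000 : ℝ))^4 := pow_le_pow_left₀ h0 hw 4
    _ = (187388721/1000000000000 : ℝ) := by norm_num
  have o5 : (0:ℝ) ≤ (t - (537/1000 : ℝ))^5 := pow_nonneg h0 5
  have o6 : (0:ℝ) ≤ (t - (537/1000 : ℝ))^6 := pow_nonneg h0 6
  have o7 : (0:ℝ) ≤ (t - (537/1000 : ℝ))^7 := pow_nonneg h0 7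
  have e8 : (t - (537/1000 : ℝ))^8 ≤ (35114532758015841/1000000000000000000000000 : ℝ) := by calc (t - (537/1000 : ℝ))^8 ≤ ((117/1000 : ℝ))^8 := pow_le_pow_left₀ h0 hw 8
    _ = (35114532758015841/1000000000000000000000000 : ℝ) := by norm_num
  have e9 : (t - (537/1000 : ℝ))^9 ≤ (4108400332687853397/1000000000000000000000000000 : ℝ) := by calc (t - (537/1000 : ℝ))^9 ≤ ((117/1000 : ℝ))^9 := pow_le_pow_left₀ h0 hw 9
    _ = (4108400332687853397/1000000000000000000000000000 : ℝ) := by norm_num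
  have e10 : (t - (537/1000 : ℝ))^10 ≤ (480682838924478847449/1000000000000000000000000000000 : ℝ) := by calc (t - (537/1000 : ℝ))^10 ≤ ((117/1000 : ℝ))^10 := pow_le_pow_left₀ h0 hw 10
    _ = (480682838924478847449/1000000000000000000000000000000 : ℝ) := by norm_num
  have e11 : (t - (537/1000 : ℝ))^11 ≤ (56239892154164025151533/1000000000000000000000000000000000 : ℝ) := by calc (t - (537/1000 : ℝ))^11 ≤ ((117/1000 : ℝ))^11 := pow_le_pow_left₀ h0 hw 11
    _ = (56239892154164025151533/1000000000000000000000000000000000 : ℝ) := by norm_num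
  have e12 : (t - (537/1000 : ℝ))^12 ≤ (6580067382037190942729361/1000000000000000000000000000000000000 : ℝ) := by calc (t - (537/1000 : ℝ))^12 ≤ ((117/1000 : ℝ))^12 := pow_le_pow_left₀ h0 hw 12
    _ = (6580067382037190942729361/1000000000000000000000000000000000000 : ℝ) := by norm_num
  have e13 : (t - (537/1000 : ℝ))^13 ≤ (769867883698351340299335237/1000000000000000000000000000000000000000 : ℝ) := by calc (t - (537/1000 : ℝ))^13 ≤ ((117/1000 : ℝ))^13 := pow_le_pow_left₀ h0 hw 13
    _ = (769867883698351340299335237/1000000000000000000000000000000000000000 : ℝ) := by norm_num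
  rw [hrep]
  linarith [h0, hw, e2, e3, e4, o5, o6, o7, e8, e9, e10, e11, e12, e13]

lemma ppD_pos1_seg3 (t : ℝ) (hlo : (327/500 : ℝ) ≤ t) (hhi : t ≤ (691/1000 : ℝ)) : 0 < ppD t := by
  have hrep : ppD t = (4393409478278212775797894516074581/14901161193847656250000000000000 : ℝ) + (-62288686864853244370061935036811/29802322387695312500000000000 : ℝ) * (t - (327/500 : ℝ)) + (-643122423922224431192766934629/29802322387695312500000000 : ℝ) * (t - (327/500 : ℝ))^2 + (-1329445376738788425788544649/59604644775390625000000 : ℝ) * (t - (327/500 : ℝ))^3 + (9671605372259480427997563/47683715820312500000 : ℝ) * (t - (327/500 : ℝ))^4 + (319055334674999781965871/476837158203125000 : ℝ) * (t - (327/500 : ℝ))^5 + (169324749643548212882/476837158203125 : ℝ) * (t - (327/500 : ℝ))^6 + (-7772185334866146136/3814697265625 : ℝ) * (t - (327/500 : ℝ))^7 + (-166765896959123304/30517578125 : ℝ) * (t - (327/500 : ℝ))^8 + (-332326350273312/48828125 : ℝ) * (t - (327/500 : ℝ))^9 + (-9732818312448/1953125 : ℝ) * (t - (327/500 : ℝ))^10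 + (-34309751808/15625 : ℝ) * (t - (327/500 : ℝ))^11 + (-67598336/125 : ℝ) * (t - (327/500 : ℝ))^12 + (-57344 : ℝ) * (t - (327/500 : ℝ))^13 + (0 : ℝ) * (t - (327/500 : ℝ))^14 := by unfold ppD; ring
  have h0 : (0:ℝ) ≤ t - (327/500 : ℝ) := by linarith
  have hw : t - (327/500 : ℝ) ≤ (37/1000 : ℝ) := by linarith
  have e2 : (t - (327/500 : ℝ))^2 ≤ (1369/1000000 : ℝ) := by calc (t - (327/500 : ℝ))^2 ≤ ((37/1000 : ℝ))^2 := pow_le_pow_left₀ h0 hw 2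
    _ = (1369/1000000 : ℝ) := by norm_num
  have e3 : (t - (327/500 : ℝ))^3 ≤ (50653/1000000000 : ℝ) := by calc (t - (327/500 : ℝ))^3 ≤ ((37/1000 : ℝ))^3 := pow_le_pow_left₀ h0 hw 3
    _ = (50653/1000000000 : ℝ) := by norm_num
  have o4 : (0:ℝ) ≤ (t - (327/500 : ℝ))^4 := pow_nonneg h0 4
  have o5 : (0:ℝ) ≤ (t - (327/500 : ℝ))^5 := pow_nonneg h0 5
  have o6 : (0:ℝ) ≤ (t - (327/500 : ℝ))^6 := pow_nonneg h0 6
  have e7 : (t - (327/500 : ℝ))^7 ≤ (94931877133/1000000000000000000000 : ℝ) := by calc (t - (327/500 : ℝ))^7 ≤ ((37/1000 : ℝ))^7 := pow_le_pow_left₀ h0 hw 7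
    _ = (94931877133/1000000000000000000000 : ℝ) := by norm_num
  have e8 : (t - (327/500 : ℝ))^8 ≤ (3512479453921/1000000000000000000000000 : ℝ) := by calc (t - (327/500 : ℝ))^8 ≤ ((37/1000 : ℝ))^8 := pow_le_pow_left₀ h0 hw 8
    _ = (3512479453921/1000000000000000000000000 : ℝ) := by norm_num
  have e9 : (t - (327/500 : ℝ))^9 ≤ (129961739795077/1000000000000000000000000000 : ℝ) := by calc (t - (327/500 : ℝ))^9 ≤ ((37/1000 : ℝ))^9 := pow_le_pow_left₀ h0 hw 9
    _ = (129961739795077/1000000000000000000000000000 : ℝ) := by norm_num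
  have e10 : (t - (327/500 : ℝ))^10 ≤ (4808584372417849/1000000000000000000000000000000 : ℝ) := by calc (t - (327/500 : ℝ))^10 ≤ ((37/1000 : ℝ))^10 := pow_le_pow_left₀ h0 hw 10
    _ = (4808584372417849/1000000000000000000000000000000 : ℝ) := by norm_num
  have e11 : (t - (327/500 : ℝ))^11 ≤ (177917621779460413/1000000000000000000000000000000000 : ℝ) := by calc (t - (327/500 : ℝ))^11 ≤ ((37/1000 : ℝ))^11 := pow_le_pow_left₀ h0 hw 11
    _ = (177917621779460413/1000000000000000000000000000000000 : ℝ) := by norm_num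
  have e12 : (t - (327/500 : ℝ))^12 ≤ (6582952005840035281/1000000000000000000000000000000000000 : ℝ) := by calc (t - (327/500 : ℝ))^12 ≤ ((37/1000 : ℝ))^12 := pow_le_pow_left₀ h0 hw 12
    _ = (6582952005840035281/1000000000000000000000000000000000000 : ℝ) := by norm_num
  have e13 : (t - (327/500 : ℝ))^13 ≤ (243569224216081305397/1000000000000000000000000000000000000000 : ℝ) := by calc (t - (327/500 : ℝ))^13 ≤ ((37/1000 : ℝ))^13 := pow_le_pow_left₀ h0 hw 13
    _ = (243569224216081305397/1000000000000000000000000000000000000000 : ℝ) := by norm_num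
  rw [hrep]
  linarith [h0, hw, e2, e3, o4, o5, o6, e7, e8, e9, e10, e11, e12, e13]

lemma ppD_pos1_seg4 (t : ℝ) (hlo : (691/1000 : ℝ) ≤ t) (hhi : t ≤ (699/1000 : ℝ)) : 0 < ppD t := by
  have hrep : ppD t = (22858814099427911282095165292248592103/122070312500000000000000000000000000 : ℝ) + (-455454628369866200387690931571238171/122070312500000000000000000000000 : ℝ) * (t - (691/1000 : ℝ)) + (-1345449319701334429296500105183343/61035156250000000000000000000 : ℝ) * (t - (691/1000 : ℝ))^2 + (1042335118032339680812153572599/61035156250000000000000000 : ℝ) * (t - (691/1000 : ℝ))^3 + (8044773777835886573074863689/24414062500000000000000 : ℝ) * (t - (691/1000 : ℝ))^4 + (82051751809071681238860111/122070312500000000000 : ℝ) * (t - (691/1000 : ℝ))^5 + (-12605443139423605708293/30517578125000000 : ℝ) * (t - (691/1000 : ℝ))^6 + (-122743397650901736923/30517578125000 : ℝ) * (t - (691/1000 : ℝ))^7 + (-983501784218816559/122070312500 : ℝ) * (t - (691/1000 : ℝ))^8 + (-430725904144722/48828125 : ℝ) * (t - (691/1000 : ℝ))^9 + (-11575383515872/1953125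 : ℝ) * (t - (691/1000 : ℝ))^10 + (-38157136128/15625 : ℝ) * (t - (691/1000 : ℝ))^11 + (-71046144/125 : ℝ) * (t - (691/1000 : ℝ))^12 + (-57344 : ℝ) * (t - (691/1000 : ℝ))^13 + (0 : ℝ) * (t - (691/1000 : ℝ))^14 := by unfold ppD; ring
  have h0 : (0:ℝ) ≤ t - (691/1000 : ℝ) := by linarith
  have hw : t - (691/1000 : ℝ) ≤ (1/125 : ℝ) := by linarith
  have e2 : (t - (691/1000 : ℝ))^2 ≤ (1/15625 : ℝ) := by calc (t - (691/1000 : ℝ))^2 ≤ ((1/125 : ℝ))^2 := pow_le_pow_left₀ h0 hw 2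
    _ = (1/15625 : ℝ) := by norm_num
  have o3 : (0:ℝ) ≤ (t - (691/1000 : ℝ))^3 := pow_nonneg h0 3
  have o4 : (0:ℝ) ≤ (t - (691/1000 : ℝ))^4 := pow_nonneg h0 4
  have o5 : (0:ℝ) ≤ (t - (691/1000 : ℝ))^5 := pow_nonneg h0 5
  have e6 : (t - (691/1000 : ℝ))^6 ≤ (1/3814697265625 : ℝ) := by calc (t - (691/1000 : ℝ))^6 ≤ ((1/125 : ℝ))^6 := pow_le_pow_left₀ h0 hw 6
    _ = (1/3814697265625 : ℝ) := by norm_num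
  have e7 : (t - (691/1000 : ℝ))^7 ≤ (1/476837158203125 : ℝ) := by calc (t - (691/1000 : ℝ))^7 ≤ ((1/125 : ℝ))^7 := pow_le_pow_left₀ h0 hw 7
    _ = (1/476837158203125 : ℝ) := by norm_num
  have e8 : (t - (691/1000 : ℝ))^8 ≤ (1/59604644775390625 : ℝ) := by calc (t - (691/1000 : ℝ))^8 ≤ ((1/125 : ℝ))^8 := pow_le_pow_left₀ h0 hw 8
    _ = (1/59604644775390625 : ℝ) := by norm_num
  have e9 : (t - (691/1000 : ℝ))^9 ≤ (1/7450580596923828125 : ℝ) := by calc (t - (691/1000 : ℝ))^9 ≤ ((1/125 : ℝ))^9 := pow_le_pow_left₀ h0 hw 9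
    _ = (1/7450580596923828125 : ℝ) := by norm_num
  have e10 : (t - (691/1000 : ℝ))^10 ≤ (1/931322574615478515625 : ℝ) := by calc (t - (691/1000 : ℝ))^10 ≤ ((1/125 : ℝ))^10 := pow_le_pow_left₀ h0 hw 10
    _ = (1/931322574615478515625 : ℝ) := by norm_num
  have e11 : (t - (691/1000 : ℝ))^11 ≤ (1/116415321826934814453125 : ℝ) := by calc (t - (691/1000 : ℝ))^11 ≤ ((1/125 : ℝ))^11 := pow_le_pow_left₀ h0 hw 11
    _ = (1/116415321826934814453125 : ℝ) := by norm_num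
  have e12 : (t - (691/1000 : ℝ))^12 ≤ (1/14551915228366851806640625 : ℝ) := by calc (t - (691/1000 : ℝ))^12 ≤ ((1/125 : ℝ))^12 := pow_le_pow_left₀ h0 hw 12
    _ = (1/14551915228366851806640625 : ℝ) := by norm_num
  have e13 : (t - (691/1000 : ℝ))^13 ≤ (1/1818989403545856475830078125 : ℝ) := by calc (t - (691/1000 : ℝ))^13 ≤ ((1/125 : ℝ))^13 := pow_le_pow_left₀ h0 hw 13
    _ = (1/1818989403545856475830078125 : ℝ) := by norm_num
  rw [hrep]
  linarith [h0, hw, e2, o3, o4, o5, e6, e7, e8, e9, e10, e11, e12, e13]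

lemma ppD_pos1_seg5 (t : ℝ) (hlo : (699/1000 : ℝ) ≤ t) (hhi : t ≤ (7/10 : ℝ)) : 0 < ppD t := by
  have hrep : ppD t = (19044194342082792224771793632459569807/122070312500000000000000000000000000 : ℝ) + (-498024701842550709987042819401197691/122070312500000000000000000000000 : ℝ) * (t - (699/1000 : ℝ)) + (-1312501963090784932690482882216327/61035156250000000000000000000 : ℝ) * (t - (699/1000 : ℝ))^2 + (1711879314061594300664552420999/61035156250000000000000000 : ℝ) * (t - (699/1000 : ℝ))^3 + (8689689867511958350233291201/24414062500000000000000 : ℝ) * (t - (699/1000 : ℝ))^4 + (78942877507355529041909391/122070312500000000000 : ℝ) * (t - (699/1000 : ℝ))^5 + (-19931416825099879793197/30517578125000000 : ℝ) * (t - (699/1000 : ℝ))^6 + (-139110885054321403403/30517578125000 : ℝ) * (t - (699/1000 : ℝ))^7 + (-1063141340674139991/122070312500 : ℝ) * (t - (699/1000 : ℝ))^8 + (-454299533904402/48828125 : ℝ) * (t - (699/1000 : ℝ))^9 + (-11999817459168/1953125 : ℝ) * (t - (699/1000 : ℝ))^10 + (-39014162688/15625 : ℝ) * (t - (699/1000 :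 ℝ))^11 + (-71791616/125 : ℝ) * (t - (699/1000 : ℝ))^12 + (-57344 : ℝ) * (t - (699/1000 : ℝ))^13 + (0 : ℝ) * (t - (699/1000 : ℝ))^14 := by unfold ppD; ring
  have h0 : (0:ℝ) ≤ t - (699/1000 : ℝ) := by linarith
  have hw : t - (699/1000 : ℝ) ≤ (1/1000 : ℝ) := by linarith
  have e2 : (t - (699/1000 : ℝ))^2 ≤ (1/1000000 : ℝ) := by calc (t - (699/1000 : ℝ))^2 ≤ ((1/1000 : ℝ))^2 := pow_le_pow_left₀ h0 hw 2
    _ = (1/1000000 : ℝ) := by norm_num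
  have o3 : (0:ℝ) ≤ (t - (699/1000 : ℝ))^3 := pow_nonneg h0 3
  have o4 : (0:ℝ) ≤ (t - (699/1000 : ℝ))^4 := pow_nonneg h0 4
  have o5 : (0:ℝ) ≤ (t - (699/1000 : ℝ))^5 := pow_nonneg h0 5
  have e6 : (t - (699/1000 : ℝ))^6 ≤ (1/1000000000000000000 : ℝ) := by calc (t - (699/1000 : ℝ))^6 ≤ ((1/1000 : ℝ))^6 := pow_le_pow_left₀ h0 hw 6
    _ = (1/1000000000000000000 : ℝ) := by norm_num
  have e7 : (t - (699/1000 : ℝ))^7 ≤ (1/1000000000000000000000 : ℝ) := by calc (t - (699/1000 : ℝ))^7 ≤ ((1/1000 : ℝ))^7 := pow_le_pow_left₀ h0 hw 7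
    _ = (1/1000000000000000000000 : ℝ) := by norm_num
  have e8 : (t - (699/1000 : ℝ))^8 ≤ (1/1000000000000000000000000 : ℝ) := by calc (t - (699/1000 : ℝ))^8 ≤ ((1/1000 : ℝ))^8 := pow_le_pow_left₀ h0 hw 8
    _ = (1/1000000000000000000000000 : ℝ) := by norm_num
  have e9 : (t - (699/1000 : ℝ))^9 ≤ (1/1000000000000000000000000000 : ℝ) := by calc (t - (699/1000 : ℝ))^9 ≤ ((1/1000 : ℝ))^9 := pow_le_pow_left₀ h0 hw 9
    _ = (1/1000000000000000000000000000 : ℝ) := by norm_num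
  have e10 : (t - (699/1000 : ℝ))^10 ≤ (1/1000000000000000000000000000000 : ℝ) := by calc (t - (699/1000 : ℝ))^10 ≤ ((1/1000 : ℝ))^10 := pow_le_pow_left₀ h0 hw 10
    _ = (1/1000000000000000000000000000000 : ℝ) := by norm_num
  have e11 : (t - (699/1000 : ℝ))^11 ≤ (1/1000000000000000000000000000000000 : ℝ) := by calc (t - (699/1000 : ℝ))^11 ≤ ((1/1000 : ℝ))^11 := pow_le_pow_left₀ h0 hw 11
    _ = (1/1000000000000000000000000000000000 : ℝ) := by norm_num
  have e12 : (t - (699/1000 : ℝ))^12 ≤ (1/1000000000000000000000000000000000000 : ℝ) := by calc (t - (699/1000 : ℝ))^12 ≤ ((1/1000 : ℝ))^12 := pow_le_pow_left₀ h0 hw 12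
    _ = (1/1000000000000000000000000000000000000 : ℝ) := by norm_num
  have e13 : (t - (699/1000 : ℝ))^13 ≤ (1/1000000000000000000000000000000000000000 : ℝ) := by calc (t - (699/1000 : ℝ))^13 ≤ ((1/1000 : ℝ))^13 := pow_le_pow_left₀ h0 hw 13
    _ = (1/1000000000000000000000000000000000000000 : ℝ) := by norm_num
  rw [hrep]
  linarith [h0, hw, e2, o3, o4, o5, e6, e7, e8, e9, e10, e11, e12, e13]

lemma ppD_pos1 (t : ℝ) (hlo : (27/100 : ℝ) ≤ t) (hhi : t ≤ (7/10 : ℝ)) : 0 < ppD t := by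
  rcases le_total t (79/200 : ℝ) with hc0|hc0
  · exact ppD_pos1_seg0 t (by linarith) hc0
  rcases le_total t (537/1000 : ℝ) with hc1|hc1
  · exact ppD_pos1_seg1 t (by linarith) hc1
  rcases le_total t (327/500 : ℝ) with hc2|hc2
  · exact ppD_pos1_seg2 t (by linarith) hc2
  rcases le_total t (691/1000 : ℝ) with hc3|hc3
  · exact ppD_pos1_seg3 t (by linarith) hc3
  rcases le_total t (699/1000 : ℝ) with hc4|hc4
  · exact ppD_pos1_seg4 t (by linarith) hc4
  exact ppD_pos1_seg5 t (by linarith) hhi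

lemma ppD_neg1_seg0 (t : ℝ) (hlo : (3/4 : ℝ) ≤ t) (hhi : t ≤ (409/500 : ℝ)) : ppD t < 0 := by
  have hrep : ppD t = (-832775/8192 : ℝ) + (-11971835/2048 : ℝ) * (t - (3/4 : ℝ)) + (-2791473/256 : ℝ) * (t - (3/4 : ℝ))^2 + (7326911/64 : ℝ) * (t - (3/4 : ℝ))^3 + (15028515/32 : ℝ) * (t - (3/4 : ℝ))^4 + (997455/8 : ℝ) * (t - (3/4 : ℝ))^5 + (-3027542 : ℝ) * (t - (3/4 : ℝ))^6 + (-9086488 : ℝ) * (t - (3/4 : ℝ))^7 + (-13755528 : ℝ) * (t - (3/4 : ℝ))^8 + (-12811680 : ℝ) * (t - (3/4 : ℝ))^9 + (-7645440 : ℝ) * (t - (3/4 : ℝ))^10 + (-2860032 : ℝ) * (t - (3/4 : ℝ))^11 + (-612352 : ℝ) * (t - (3/4 : ℝ))^12 + (-57344 : ℝ) * (t - (3/4 : ℝ))^13 + (0 : ℝ) * (t - (3/4 : ℝ))^14 := by unfold ppD; ring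
  have h0 : (0:ℝ) ≤ t - (3/4 : ℝ) := by linarith
  have hw : t - (3/4 : ℝ) ≤ (17/250 : ℝ) := by linarith
  have o2 : (0:ℝ) ≤ (t - (3/4 : ℝ))^2 := pow_nonneg h0 2
  have e3 : (t - (3/4 : ℝ))^3 ≤ (4913/15625000 : ℝ) := by calc (t - (3/4 : ℝ))^3 ≤ ((17/250 : ℝ))^3 := pow_le_pow_left₀ h0 hw 3
    _ = (4913/15625000 : ℝ) := by norm_num
  have e4 : (t - (3/4 : ℝ))^4 ≤ (83521/3906250000 : ℝ) := by calc (t - (3/4 : ℝ))^4 ≤ ((17/250 : ℝ))^4 := pow_le_pow_left₀ h0 hw 4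
    _ = (83521/3906250000 : ℝ) := by norm_num
  have e5 : (t - (3/4 : ℝ))^5 ≤ (1419857/976562500000 : ℝ) := by calc (t - (3/4 : ℝ))^5 ≤ ((17/250 : ℝ))^5 := pow_le_pow_left₀ h0 hw 5
    _ = (1419857/976562500000 : ℝ) := by norm_num
  have o6 : (0:ℝ) ≤ (t - (3/4 : ℝ))^6 := pow_nonneg h0 6
  have o7 : (0:ℝ) ≤ (t - (3/4 : ℝ))^7 := pow_nonneg h0 7
  have o8 : (0:ℝ) ≤ (t - (3/4 : ℝ))^8 := pow_nonneg h0 8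
  have o9 : (0:ℝ) ≤ (t - (3/4 : ℝ))^9 := pow_nonneg h0 9
  have o10 : (0:ℝ) ≤ (t - (3/4 : ℝ))^10 := pow_nonneg h0 10
  have o11 : (0:ℝ) ≤ (t - (3/4 : ℝ))^11 := pow_nonneg h0 11
  have o12 : (0:ℝ) ≤ (t - (3/4 : ℝ))^12 := pow_nonneg h0 12
  have o13 : (0:ℝ) ≤ (t - (3/4 : ℝ))^13 := pow_nonneg h0 13
  rw [hrep]
  linarith [h0, hw, o2, e3, e4, e5, o6, o7, o8, o9, o10, o11, o12, o13]

lemma ppD_neg1_seg1 (t : ℝ) (hlo : (409/500 : ℝ) ≤ t) (hhi : t ≤ (449/500 : ℝ)) : ppD t < 0 := by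
  have hrep : ppD t = (-7506125733467920610038414198284953/14901161193847656250000000000000 : ℝ) + (-154077085479012768177569970966971/29802322387695312500000000000 : ℝ) * (t - (409/500 : ℝ)) + (732610462411731026238938825793/29802322387695312500000000 : ℝ) * (t - (409/500 : ℝ))^2 + (13167792989868110185768153599/59604644775390625000000 : ℝ) * (t - (409/500 : ℝ))^3 + (8532744139685377751223161/47683715820312500000 : ℝ) * (t - (409/500 : ℝ))^4 + (-1083636318826162841392689/476837158203125000 : ℝ) * (t - (409/500 : ℝ))^5 + (-4533938518507128047114/476837158203125 : ℝ) * (t - (409/500 : ℝ))^6 + (-72523308106702312984/3814697265625 : ℝ) * (t - (409/500 : ℝ))^7 + (-712344657548433528/30517578125 : ℝ) * (t - (409/500 : ℝ))^8 + (-917049739710752/48828125 : ℝ) * (t - (409/500 : ℝ))^9 + (-19485899949824/1953125 : ℝ) * (t - (409/500 : ℝ))^10 + (-52818650112/15625 : ℝ) * (t - (409/500 : ℝ))^11 + (-82880512/125 : ℝ) * (t - (409/500 : ℝ))^12 + (-57344 : ℝ) * (t - (409/500 : ℝ))^13 + (0 : ℝ) * (t - (409/500 : ℝ))^14 := by unfold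 ppD; ring
  have h0 : (0:ℝ) ≤ t - (409/500 : ℝ) := by linarith
  have hw : t - (409/500 : ℝ) ≤ (2/25 : ℝ) := by linarith
  have e2 : (t - (409/500 : ℝ))^2 ≤ (4/625 : ℝ) := by calc (t - (409/500 : ℝ))^2 ≤ ((2/25 : ℝ))^2 := pow_le_pow_left₀ h0 hw 2
    _ = (4/625 : ℝ) := by norm_num
  have e3 : (t - (409/500 : ℝ))^3 ≤ (8/15625 : ℝ) := by calc (t - (409/500 : ℝ))^3 ≤ ((2/25 : ℝ))^3 := pow_le_pow_left₀ h0 hw 3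
    _ = (8/15625 : ℝ) := by norm_num
  have e4 : (t - (409/500 : ℝ))^4 ≤ (16/390625 : ℝ) := by calc (t - (409/500 : ℝ))^4 ≤ ((2/25 : ℝ))^4 := pow_le_pow_left₀ h0 hw 4
    _ = (16/390625 : ℝ) := by norm_num
  have o5 : (0:ℝ) ≤ (t - (409/500 : ℝ))^5 := pow_nonneg h0 5
  have o6 : (0:ℝ) ≤ (t - (409/500 : ℝ))^6 := pow_nonneg h0 6
  have o7 : (0:ℝ) ≤ (t - (409/500 : ℝ))^7 := pow_nonneg h0 7
  have o8 : (0:ℝ) ≤ (t - (409/500 : ℝ))^8 := pow_nonneg h0 8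
  have o9 : (0:ℝ) ≤ (t - (409/500 : ℝ))^9 := pow_nonneg h0 9
  have o10 : (0:ℝ) ≤ (t - (409/500 : ℝ))^10 := pow_nonneg h0 10
  have o11 : (0:ℝ) ≤ (t - (409/500 : ℝ))^11 := pow_nonneg h0 11
  have o12 : (0:ℝ) ≤ (t - (409/500 : ℝ))^12 := pow_nonneg h0 12
  have o13 : (0:ℝ) ≤ (t - (409/500 : ℝ))^13 := pow_nonneg h0 13
  rw [hrep]
  linarith [h0, hw, e2, e3, e4, o5, o6, o7, o8, o9, o10, o11, o12, o13]

lemma ppD_neg1_seg2 (t : ℝ) (hlo : (449/500 : ℝ) ≤ t) (hhi : t ≤ (481/500 : ℝ)) : ppD t < 0 := by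
  have hrep : ppD t = (-9684829293349730700847384794554193/14901161193847656250000000000000 : ℝ) + (79866197776336957438801915390309/29802322387695312500000000000 : ℝ) * (t - (449/500 : ℝ)) + (1952124220388446857867132641673/29802322387695312500000000 : ℝ) * (t - (449/500 : ℝ))^2 + (202328596520399778573185999/59604644775390625000000 : ℝ) * (t - (449/500 : ℝ))^3 + (-98172129026174515173034799/47683715820312500000 : ℝ) * (t - (449/500 : ℝ))^4 + (-4847796982876624473882609/476837158203125000 : ℝ) * (t - (449/500 : ℝ))^5 + (-12033734194936352474394/476837158203125 : ℝ) * (t - (449/500 : ℝ))^6 + (-148537048103573411224/3814697265625 : ℝ) * (t - (449/500 : ℝ))^7 + (-1221836306168159928/30517578125 : ℝ) * (t - (449/500 : ℝ))^8 + (-1368596998278432/48828125 : ℝ) * (t - (449/500 : ℝ))^9 + (-25859363225344/1953125 : ℝ) * (t - (449/500 : ℝ))^10 + (-63211594752/15625 : ℝ) * (t - (449/500 : ℝ))^11 + (-90335232/125 : ℝ) * (t - (449/500 : ℝ))^12 + (-57344 : ℝ) * (t - (449/500 : ℝ))^13 + (0 : ℝ) * (t - (449/500 : ℝ))^14 :=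 by unfold ppD; ring
  have h0 : (0:ℝ) ≤ t - (449/500 : ℝ) := by linarith
  have hw : t - (449/500 : ℝ) ≤ (8/125 : ℝ) := by linarith
  have e2 : (t - (449/500 : ℝ))^2 ≤ (64/15625 : ℝ) := by calc (t - (449/500 : ℝ))^2 ≤ ((8/125 : ℝ))^2 := pow_le_pow_left₀ h0 hw 2
    _ = (64/15625 : ℝ) := by norm_num
  have e3 : (t - (449/500 : ℝ))^3 ≤ (512/1953125 : ℝ) := by calc (t - (449/500 : ℝ))^3 ≤ ((8/125 : ℝ))^3 := pow_le_pow_left₀ h0 hw 3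
    _ = (512/1953125 : ℝ) := by norm_num
  have o4 : (0:ℝ) ≤ (t - (449/500 : ℝ))^4 := pow_nonneg h0 4
  have o5 : (0:ℝ) ≤ (t - (449/500 : ℝ))^5 := pow_nonneg h0 5
  have o6 : (0:ℝ) ≤ (t - (449/500 : ℝ))^6 := pow_nonneg h0 6
  have o7 : (0:ℝ) ≤ (t - (449/500 : ℝ))^7 := pow_nonneg h0 7
  have o8 : (0:ℝ) ≤ (t - (449/500 : ℝ))^8 := pow_nonneg h0 8
  have o9 : (0:ℝ) ≤ (t - (449/500 : ℝ))^9 := pow_nonneg h0 9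
  have o10 : (0:ℝ) ≤ (t - (449/500 : ℝ))^10 := pow_nonneg h0 10
  have o11 : (0:ℝ) ≤ (t - (449/500 : ℝ))^11 := pow_nonneg h0 11
  have o12 : (0:ℝ) ≤ (t - (449/500 : ℝ))^12 := pow_nonneg h0 12
  have o13 : (0:ℝ) ≤ (t - (449/500 : ℝ))^13 := pow_nonneg h0 13
  rw [hrep]
  linarith [h0, hw, e2, e3, o4, o5, o6, o7, o8, o9, o10, o11, o12, o13]

lemma ppD_neg1_seg3 (t : ℝ) (hlo : (481/500 : ℝ) ≤ t) (hhi : t ≤ (987/1000 : ℝ)) : ppD t < 0 := by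
  have hrep : ppD t = (-3823840298559135861071441728924337/14901161193847656250000000000000 : ℝ) + (235778891912265522113258402469349/29802322387695312500000000000 : ℝ) * (t - (481/500 : ℝ)) + (-548513132463166794645515957463/29802322387695312500000000 : ℝ) * (t - (481/500 : ℝ))^2 + (-65436299314390762899513858801/59604644775390625000000 : ℝ) * (t - (481/500 : ℝ))^3 + (-346704607188028906439899471/47683715820312500000 : ℝ) * (t - (481/500 : ℝ))^4 + (-11376105008901335542896369/476837158203125000 : ℝ) * (t - (481/500 : ℝ))^5 + (-22858864873933406783066/476837158203125 : ℝ) * (t - (481/500 : ℝ))^6 + (-244177420442102965144/3814697265625 : ℝ) * (t - (481/500 : ℝ))^7 + (-1794531881986642872/30517578125 : ℝ) * (t - (481/500 : ℝ))^8 + (-1828916432682272/48828125 : ℝ) * (t - (481/500 : ℝ))^9 + (-31811956580096/1953125 : ℝ) * (t - (481/500 : ℝ))^10 + (-72170038272/15625 : ℝ) * (t - (481/500 : ℝ))^11 + (-96299008/125 : ℝ) * (t - (481/500 : ℝ))^12 + (-57344 : ℝ) * (t - (481/500 : ℝ))^13 + (0 : ℝ) * (t - (481/500 : ℝ))^14 :=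 by unfold ppD; ring
  have h0 : (0:ℝ) ≤ t - (481/500 : ℝ) := by linarith
  have hw : t - (481/500 : ℝ) ≤ (1/40 : ℝ) := by linarith
  have o2 : (0:ℝ) ≤ (t - (481/500 : ℝ))^2 := pow_nonneg h0 2
  have o3 : (0:ℝ) ≤ (t - (481/500 : ℝ))^3 := pow_nonneg h0 3
  have o4 : (0:ℝ) ≤ (t - (481/500 : ℝ))^4 := pow_nonneg h0 4
  have o5 : (0:ℝ) ≤ (t - (481/500 : ℝ))^5 := pow_nonneg h0 5
  have o6 : (0:ℝ) ≤ (t - (481/500 : ℝ))^6 := pow_nonneg h0 6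
  have o7 : (0:ℝ) ≤ (t - (481/500 : ℝ))^7 := pow_nonneg h0 7
  have o8 : (0:ℝ) ≤ (t - (481/500 : ℝ))^8 := pow_nonneg h0 8
  have o9 : (0:ℝ) ≤ (t - (481/500 : ℝ))^9 := pow_nonneg h0 9
  have o10 : (0:ℝ) ≤ (t - (481/500 : ℝ))^10 := pow_nonneg h0 10
  have o11 : (0:ℝ) ≤ (t - (481/500 : ℝ))^11 := pow_nonneg h0 11
  have o12 : (0:ℝ) ≤ (t - (481/500 : ℝ))^12 := pow_nonneg h0 12
  have o13 : (0:ℝ) ≤ (t - (481/500 : ℝ))^13 := pow_nonneg h0 13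
  rw [hrep]
  linarith [h0, hw, o2, o3, o4, o5, o6, o7, o8, o9, o10, o11, o12, o13]

lemma ppD_neg1_seg4 (t : ℝ) (hlo : (987/1000 : ℝ) ≤ t) (hhi : t ≤ (499/500 : ℝ)) : ppD t < 0 := by
  have hrep : ppD t = (-11055918743742204436314893863218251729/122070312500000000000000000000000000 : ℝ) + (540622079446563513838571094334644229/122070312500000000000000000000000 : ℝ) * (t - (987/1000 : ℝ)) + (-8058537296954642361785130055335399/61035156250000000000000000000 : ℝ) * (t - (987/1000 : ℝ))^2 + (-121455623019149192778653693665849/61035156250000000000000000 : ℝ) * (t - (987/1000 : ℝ))^3 + (-262187108261305449810565580127/24414062500000000000000 : ℝ) * (t - (987/1000 : ℝ))^4 + (-3899128671066258968420325489/122070312500000000000 : ℝ) * (t - (987/1000 : ℝ))^5 + (-1837761747379968410655949/30517578125000000 : ℝ) * (t - (987/1000 : ℝ))^6 + (-2338995221008302292427/30517578125000 : ℝ) * (t - (987/1000 : ℝ))^7 + (-8264284368292783863/122070312500 : ℝ) * (t - (987/1000 : ℝ))^8 + (-2035623891919122/48828125 : ℝ) * (t - (987/1000 : ℝ))^9 +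 (-34355369865696/1953125 : ℝ) * (t - (987/1000 : ℝ))^10 + (-75824931072/15625 : ℝ) * (t - (987/1000 : ℝ))^11 + (-98628608/125 : ℝ) * (t - (987/1000 : ℝ))^12 + (-57344 : ℝ) * (t - (987/1000 : ℝ))^13 + (0 : ℝ) * (t - (987/1000 : ℝ))^14 := by unfold ppD; ring
  have h0 : (0:ℝ) ≤ t - (987/1000 : ℝ) := by linarith
  have hw : t - (987/1000 : ℝ) ≤ (11/1000 : ℝ) := by linarith
  have o2 : (0:ℝ) ≤ (t - (987/1000 : ℝ))^2 := pow_nonneg h0 2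
  have o3 : (0:ℝ) ≤ (t - (987/1000 : ℝ))^3 := pow_nonneg h0 3
  have o4 : (0:ℝ) ≤ (t - (987/1000 : ℝ))^4 := pow_nonneg h0 4
  have o5 : (0:ℝ) ≤ (t - (987/1000 : ℝ))^5 := pow_nonneg h0 5
  have o6 : (0:ℝ) ≤ (t - (987/1000 : ℝ))^6 := pow_nonneg h0 6
  have o7 : (0:ℝ) ≤ (t - (987/1000 : ℝ))^7 := pow_nonneg h0 7
  have o8 : (0:ℝ) ≤ (t - (987/1000 : ℝ))^8 := pow_nonneg h0 8
  have o9 : (0:ℝ) ≤ (t - (987/1000 : ℝ))^9 := pow_nonneg h0 9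
  have o10 : (0:ℝ) ≤ (t - (987/1000 : ℝ))^10 := pow_nonneg h0 10
  have o11 : (0:ℝ) ≤ (t - (987/1000 : ℝ))^11 := pow_nonneg h0 11
  have o12 : (0:ℝ) ≤ (t - (987/1000 : ℝ))^12 := pow_nonneg h0 12
  have o13 : (0:ℝ) ≤ (t - (987/1000 : ℝ))^13 := pow_nonneg h0 13
  rw [hrep]
  linarith [h0, hw, o2, o3, o4, o5, o6, o7, o8, o9, o10, o11, o12, o13]

lemma ppD_neg1_seg5 (t : ℝ) (hlo : (499/500 : ℝ) ≤ t) (hhi : t ≤ (1 : ℝ)) : ppD t < 0 := by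
  have hrep : ppD t = (-903612223746973956734732098173743/14901161193847656250000000000000 : ℝ) + (22118549524042583230055204959909/29802322387695312500000000000 : ℝ) * (t - (499/500 : ℝ)) + (-6137311712665990601432387545977/29802322387695312500000000 : ℝ) * (t - (499/500 : ℝ))^2 + (-149175249046602839358774326001/59604644775390625000000 : ℝ) * (t - (499/500 : ℝ))^3 + (-601239918265532431981075249/47683715820312500000 : ℝ) * (t - (499/500 : ℝ))^4 + (-17221471805685511877649009/476837158203125000 : ℝ) * (t - (499/500 : ℝ))^5 + (-31640752095054314391494/476837158203125 : ℝ) * (t - (499/500 : ℝ))^6 + (-315804739985160304024/3814697265625 : ℝ) * (t - (499/500 : ℝ))^7 + (-2194980909717977928/30517578125 : ℝ) * (t - (499/500 : ℝ))^8 + (-2131689391392032/48828125 : ℝ) * (t - (499/500 : ℝ))^9 + (-35514571583744/1953125 : ℝ) * (t - (499/500 : ℝ))^10 + (-77460759552/15625 : ℝ) * (t - (499/500 : ℝ))^11 + (-99653632/125 : ℝ) * (t - (499/500 : ℝ))^12 + (-57344 : ℝ) * (t - (499/500 : ℝ))^13 + (0 : ℝ) * (t - (499/500 : ℝ))^14 :=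 by unfold ppD; ring
  have h0 : (0:ℝ) ≤ t - (499/500 : ℝ) := by linarith
  have hw : t - (499/500 : ℝ) ≤ (1/500 : ℝ) := by linarith
  have o2 : (0:ℝ) ≤ (t - (499/500 : ℝ))^2 := pow_nonneg h0 2
  have o3 : (0:ℝ) ≤ (t - (499/500 : ℝ))^3 := pow_nonneg h0 3
  have o4 : (0:ℝ) ≤ (t - (499/500 : ℝ))^4 := pow_nonneg h0 4
  have o5 : (0:ℝ) ≤ (t - (499/500 : ℝ))^5 := pow_nonneg h0 5
  have o6 : (0:ℝ) ≤ (t - (499/500 : ℝ))^6 := pow_nonneg h0 6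
  have o7 : (0:ℝ) ≤ (t - (499/500 : ℝ))^7 := pow_nonneg h0 7
  have o8 : (0:ℝ) ≤ (t - (499/500 : ℝ))^8 := pow_nonneg h0 8
  have o9 : (0:ℝ) ≤ (t - (499/500 : ℝ))^9 := pow_nonneg h0 9
  have o10 : (0:ℝ) ≤ (t - (499/500 : ℝ))^10 := pow_nonneg h0 10
  have o11 : (0:ℝ) ≤ (t - (499/500 : ℝ))^11 := pow_nonneg h0 11
  have o12 : (0:ℝ) ≤ (t - (499/500 : ℝ))^12 := pow_nonneg h0 12
  have o13 : (0:ℝ) ≤ (t - (499/500 : ℝ))^13 := pow_nonneg h0 13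
  rw [hrep]
  linarith [h0, hw, o2, o3, o4, o5, o6, o7, o8, o9, o10, o11, o12, o13]

lemma ppD_neg1 (t : ℝ) (hlo : (3/4 : ℝ) ≤ t) (hhi : t ≤ (1 : ℝ)) : ppD t < 0 := by
  rcases le_total t (409/500 : ℝ) with hc0|hc0
  · exact ppD_neg1_seg0 t (by linarith) hc0
  rcases le_total t (449/500 : ℝ) with hc1|hc1
  · exact ppD_neg1_seg1 t (by linarith) hc1
  rcases le_total t (481/500 : ℝ) with hc2|hc2
  · exact ppD_neg1_seg2 t (by linarith) hc2
  rcases le_total t (987/1000 : ℝ) with hc3|hc3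
  · exact ppD_neg1_seg3 t (by linarith) hc3
  rcases le_total t (499/500 : ℝ) with hc4|hc4
  · exact ppD_neg1_seg4 t (by linarith) hc4
  exact ppD_neg1_seg5 t (by linarith) hhi

lemma sq_iff (s t : ℝ) (hs : 0 < s) (ht : 0 < t) (hpyth : s^2 + t^2 = 1) :
    32*s^3*t^3*(2*t+1) - (2*t^2+2*t+1) = 0 ↔ pp t = 0 := by
  constructor
  · intro h
    have hA : (32*s^3*t^3*(2*t+1))^2 = (2*t^2+2*t+1)^2 := by
      have : 32*s^3*t^3*(2*t+1) = 2*t^2+2*t+1 := by linarith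
      rw [this]
    unfold pp
    linear_combination hA - (1024*t^6*(2*t+1)^2*(s^4 + s^2*(1-t^2) + (1-t^2)^2)) * hpyth
  · intro h
    have hsq : (32*s^3*t^3*(2*t+1))^2 = (2*t^2+2*t+1)^2 := by
      unfold pp at h
      linear_combination h + (1024*t^6*(2*t+1)^2*(s^4 + s^2*(1-t^2) + (1-t^2)^2)) * hpyth
    have hfac : (32*s^3*t^3*(2*t+1) - (2*t^2+2*t+1)) * (32*s^3*t^3*(2*t+1) + (2*t^2+2*t+1)) = 0 := by
      linear_combination hsq
    rcases mul_eq_zero.1 hfac with h'|h'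
    · exact h'
    · have hA : 0 < 32*s^3*t^3*(2*t+1) := by positivity
      nlinarith [hA]

lemma reduction (x : ℝ) (hx : x ∈ Ioo (0:ℝ) π) :
    (f x + f (2*x) = 0) ↔ (Real.cos (x/2) = 1/2 ∨ pp (Real.cos (x/2)) = 0) := by
  obtain ⟨hx0, hxpi⟩ := hx
  have hpi := Real.pi_pos
  set s := Real.sin (x/2) with hs_def
  set t := Real.cos (x/2) with ht_def
  have hs : 0 < s := Real.sin_pos_of_pos_of_lt_pi (by linarith) (by linarith)
  have ht : 0 < t := Real.cos_pos_of_mem_Ioo ⟨by linarith, by linarith⟩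
  have hpyth : s^2 + t^2 = 1 := Real.sin_sq_add_cos_sq (x/2)
  have hsinx : Real.sin x = 2*s*t := by
    have h := Real.sin_two_mul (x/2)
    rw [show (2:ℝ)*(x/2) = x by ring] at h
    exact h
  have hsin2x : Real.sin (2*x) = 2*Real.sin x*Real.cos x := Real.sin_two_mul x
  have hcosx : Real.cos x = 2*t^2 - 1 := by
    have h := Real.cos_two_mul (x/2)
    rw [show (2:ℝ)*(x/2) = x by ring] at h
    exact h
  have h2x2 : 2*x/2 = x := by ring
  have key2 : (f x + f (2*x)) * (16*s^2*t^2) =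
      (2*t-1) * (32*s^3*t^3*(2*t+1) - (2*t^2+2*t+1)) := by
    unfold f
    rw [h2x2, hsin2x, hcosx, hsinx, ← hs_def]
    field_simp
    ring_nf
  have hden : (16*s^2*t^2) ≠ 0 := by positivity
  constructor
  · intro h
    have hnum : (2*t-1) * (32*s^3*t^3*(2*t+1) - (2*t^2+2*t+1)) = 0 := by
      rw [← key2, h, zero_mul]
    rcases mul_eq_zero.1 hnum with h'|h'
    · left; linarith
    · right; exact (sq_iff s t hs ht hpyth).1 h'
  · intro h
    have hnum : (2*t-1) * (32*s^3*t^3*(2*t+1) - (2*t^2+2*t+1)) = 0 := by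
      rcases h with h'|h'
      · rw [h']; ring
      · rw [(sq_iff s t hs ht hpyth).2 h', mul_zero]
    have hz : (f x + f (2*x)) * (16*s^2*t^2) = 0 := by rw [key2, hnum]
    exact (mul_eq_zero.1 hz).resolve_right hden

lemma cos_5pi36_lt' : Real.cos (5*π/36) < 907/1000 := by
  have hpl := Real.pi_gt_d6
  have hpu := Real.pi_lt_d6
  have hl : (3141592/1000000 : ℝ)*5/36 ≤ 5*π/36 := by linarith
  have hu : 5*π/36 ≤ (3141593/1000000 : ℝ)*5/36 := by linarith
  have hx : |5*π/36| ≤ 1 := by rw [abs_of_nonneg (by linarith)]; linarith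
  have hb := Real.cos_bound hx
  have hb1 : Real.cos (5*π/36) - (1 - (5*π/36)^2/2) ≤ |5*π/36|^4 * (5/96) := (abs_sub_le_iff.1 hb).1
  rw [abs_of_nonneg (by linarith : (0:ℝ) ≤ 5*π/36)] at hb1
  have h2 : ((3141592/1000000 : ℝ)*5/36)^2 ≤ (5*π/36)^2 := by nlinarith
  have h4 : (5*π/36)^4 ≤ ((3141593/1000000 : ℝ)*5/36)^4 := pow_le_pow_left₀ (by linarith) hu 4
  nlinarith [h2, h4, hb1]

lemma sin_7pi60_gt : (357/1000 : ℝ) < Real.sin (7*π/60) := by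
  have hpl := Real.pi_gt_d6
  have hpu := Real.pi_lt_d6
  have hl : (3141592/1000000 : ℝ)*7/60 ≤ 7*π/60 := by linarith
  have hu : 7*π/60 ≤ (3141593/1000000 : ℝ)*7/60 := by linarith
  have hx : |7*π/60| ≤ 1 := by rw [abs_of_nonneg (by linarith)]; linarith
  have hb := Real.sin_bound hx
  have hb1 : (7*π/60 - (7*π/60)^3/6) - Real.sin (7*π/60) ≤ |7*π/60|^4 * (5/96) := le_trans (abs_sub_le_iff.1 hb).2 (by have ha := abs_nonneg (7*π/60); have h4 := pow_nonneg ha 4; nlinarith [mul_le_mul_of_nonneg_left hx h4])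
  rw [abs_of_nonneg (by linarith : (0:ℝ) ≤ 7*π/60)] at hb1
  have h3 : (7*π/60)^3 ≤ ((3141593/1000000 : ℝ)*7/60)^3 := pow_le_pow_left₀ (by linarith) hu 3
  have h4 : (7*π/60)^4 ≤ ((3141593/1000000 : ℝ)*7/60)^4 := pow_le_pow_left₀ (by linarith) hu 4
  nlinarith [h3, h4, hb1]

lemma sin_41pi360_lt : Real.sin (41*π/360) < 3511/10000 := by
  have hpl := Real.pi_gt_d6
  have hpu := Real.pi_lt_d6
  have hl : (3141592/1000000 : ℝ)*41/360 ≤ 41*π/360 := by linarith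
  have hu : 41*π/360 ≤ (3141593/1000000 : ℝ)*41/360 := by linarith
  have hx : |41*π/360| ≤ 1 := by rw [abs_of_nonneg (by linarith)]; linarith
  have hb := Real.sin_bound hx
  have hb1 : Real.sin (41*π/360) - (41*π/360 - (41*π/360)^3/6) ≤ |41*π/360|^4 * (5/96) := le_trans (abs_sub_le_iff.1 hb).1 (by have ha := abs_nonneg (41*π/360); have h4 := pow_nonneg ha 4; nlinarith [mul_le_mul_of_nonneg_left hx h4])
  rw [abs_of_nonneg (by linarith : (0:ℝ) ≤ 41*π/360)] at hb1
  have h3 : ((3141592/1000000 : ℝ)*41/360)^3 ≤ (41*π/360)^3 := pow_le_pow_left₀ (by positivity) hl 3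
  have h4 : (41*π/360)^4 ≤ ((3141593/1000000 : ℝ)*41/360)^4 := pow_le_pow_left₀ (by linarith) hu 4
  nlinarith [h3, h4, hb1]

lemma pp_cont : Continuous pp := by unfold pp; continuity

lemma pp_mono : StrictMonoOn pp (Icc (27/100:ℝ) (7/10)) := by
  apply strictMonoOn_of_deriv_pos (convex_Icc _ _) pp_cont.continuousOn
  intro t ht; rw [interior_Icc] at ht
  rw [(pp_hasDeriv t).deriv]
  exact ppD_pos1 t ht.1.le ht.2.le

lemma pp_anti : StrictAntiOn pp (Icc (3/4:ℝ) 1) := by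
  apply strictAntiOn_of_deriv_neg (convex_Icc _ _) pp_cont.continuousOn
  intro t ht; rw [interior_Icc] at ht
  rw [(pp_hasDeriv t).deriv]
  exact ppD_neg1 t ht.1.le ht.2.le

lemma ev1 : pp (3511/10000) < 0 := by unfold pp; norm_num
lemma ev2 : 0 < pp (357/1000) := by unfold pp; norm_num
lemma ev3 : 0 < pp (907/1000) := by unfold pp; norm_num
lemma ev4 : pp (999/1000) < 0 := by unfold pp; norm_num

lemma exists_tb : ∃ u, u ∈ Icc (3511/10000:ℝ) (357/1000) ∧ pp u = 0 := by
  have h := intermediate_value_Icc (by norm_num : (3511/10000:ℝ) ≤ 357/1000) pp_cont.continuousOn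
  obtain ⟨u, hu, hu0⟩ := h ⟨ev1.le, ev2.le⟩
  exact ⟨u, hu, hu0⟩

lemma exists_ta : ∃ u, u ∈ Icc (907/1000:ℝ) (999/1000) ∧ pp u = 0 := by
  have h := intermediate_value_Icc' (by norm_num : (907/1000:ℝ) ≤ 999/1000) pp_cont.continuousOn
  obtain ⟨u, hu, hu0⟩ := h ⟨ev4.le, ev3.le⟩
  exact ⟨u, hu, hu0⟩


theorem stmt14 : ∃ a b : ℝ, 0 < a ∧ a < 5*π/18 ∧
    2*π/3 < b ∧ b < π ∧ 138*π/180 < b ∧ b < 139*π/180 ∧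
    ∀ x ∈ Ioo (0:ℝ) π, (f x + f (2*x) = 0 ↔ x = 2*π/3 ∨ x = a ∨ x = b) := by
  obtain ⟨ta, hta, hpta⟩ := exists_ta
  obtain ⟨tb, htb, hptb⟩ := exists_tb
  obtain ⟨hta1, hta2⟩ := hta
  obtain ⟨htb1, htb2⟩ := htb
  have hpi := Real.pi_pos
  have huniq : ∀ u : ℝ, 0 < u → u < 1 → (pp u = 0 ↔ u = ta ∨ u = tb) := by
    intro u hu0 hu1
    constructor
    · intro hpu
      rcases le_total u (27/100) with h|h
      · have := pp_neg1 u hu0.le h; exact absurd hpu (by linarith)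
      rcases le_total u (7/10) with h'|h'
      · exact Or.inr (pp_mono.injOn ⟨h, h'⟩ ⟨by linarith, by linarith⟩ (hpu.trans hptb.symm))
      rcases le_total u (3/4) with h''|h''
      · have := pp_pos1 u h' h''; exact absurd hpu (by linarith)
      · exact Or.inl (pp_anti.injOn ⟨h'', hu1.le⟩ ⟨by linarith, by linarith⟩ (hpu.trans hpta.symm))
    · rintro (rfl|rfl)
      exacts [hpta, hptb]
  have hta1' : (-1:ℝ) ≤ ta := by linarith
  have hta2' : ta ≤ 1 := by linarith
  have htb1' : (-1:ℝ) ≤ tb := by linarith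
  have htb2' : tb ≤ 1 := by linarith
  have hca : Real.cos (Real.arccos ta) = ta := Real.cos_arccos hta1' hta2'
  have hcb : Real.cos (Real.arccos tb) = tb := Real.cos_arccos htb1' htb2'
  -- bounds on arccos ta
  have ha0 : 0 < Real.arccos ta := Real.arccos_pos.2 (by linarith)
  have ha1 : Real.arccos ta < 5*π/36 := by
    have h2 : Real.cos (5*π/36) < ta := by linarith [cos_5pi36_lt']
    have h3 := Real.strictAntiOn_arccos
      ⟨by linarith [Real.neg_one_le_cos (5*π/36)], by linarith⟩ ⟨hta1', hta2'⟩ h2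
    rwa [Real.arccos_cos (by positivity) (by linarith)] at h3
  -- bounds on arccos tb
  have hb1 : 23*π/60 < Real.arccos tb := by
    have h1 : Real.cos (23*π/60) = Real.sin (7*π/60) := by
      rw [← Real.cos_pi_div_two_sub]; congr 1; ring
    have h2 : tb < Real.cos (23*π/60) := by rw [h1]; linarith [sin_7pi60_gt]
    have h3 := Real.strictAntiOn_arccos ⟨htb1', htb2'⟩
      ⟨by linarith [Real.neg_one_le_cos (23*π/60)], Real.cos_le_one _⟩ h2
    rwa [Real.arccos_cos (by positivity) (by linarith)] at h3
  have hb2 : Real.arccos tb < 139*π/360 := by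
    have h1 : Real.cos (139*π/360) = Real.sin (41*π/360) := by
      rw [← Real.cos_pi_div_two_sub]; congr 1; ring
    have h2 : Real.cos (139*π/360) < tb := by rw [h1]; linarith [sin_41pi360_lt]
    have h3 := Real.strictAntiOn_arccos
      ⟨by linarith [Real.neg_one_le_cos (139*π/360)], by linarith⟩ ⟨htb1', htb2'⟩ h2
    rwa [Real.arccos_cos (by positivity) (by linarith)] at h3
  have hb3 : Real.arccos tb < π/2 := Real.arccos_lt_pi_div_two.2 (by linarith)
  refine ⟨2*Real.arccos ta, 2*Real.arccos tb, by linarith, by linarith, by linarith,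
    by linarith, by linarith, by linarith, ?_⟩
  intro x hx
  obtain ⟨hx0, hxpi⟩ := hx
  rw [reduction x ⟨hx0, hxpi⟩]
  have hc0 : 0 < Real.cos (x/2) := Real.cos_pos_of_mem_Ioo ⟨by linarith, by linarith⟩
  have hmemx : x/2 ∈ Icc (0:ℝ) π := ⟨by linarith, by linarith⟩
  have hc1 : Real.cos (x/2) < 1 := by
    have h := Real.strictAntiOn_cos (left_mem_Icc.2 (by linarith)) hmemx (by linarith)
    rwa [Real.cos_zero] at h
  constructor
  · rintro (h|h)
    · left
      have : x/2 = π/3 := Real.injOn_cos hmemx ⟨by positivity, by linarith⟩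
        (by rw [h, Real.cos_pi_div_three])
      linarith
    · rcases (huniq _ hc0 hc1).1 h with h'|h'
      · right; left
        have : x/2 = Real.arccos ta := Real.injOn_cos hmemx
          ⟨Real.arccos_nonneg _, Real.arccos_le_pi _⟩ (by rw [h', hca])
        linarith
      · right; right
        have : x/2 = Real.arccos tb := Real.injOn_cos hmemx
          ⟨Real.arccos_nonneg _, Real.arccos_le_pi _⟩ (by rw [h', hcb])
        linarith
  · rintro (rfl|rfl|rfl)
    · left; rw [show (2*π/3)/2 = π/3 by ring, Real.cos_pi_div_three]
    · right
      rw [show (2*Real.arccos ta)/2 = Real.arccos ta by ring, hca]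
      exact (huniq ta (by linarith) (by linarith)).2 (Or.inl rfl)
    · right
      rw [show (2*Real.arccos tb)/2 = Real.arccos tb by ring, hcb]
      exact (huniq tb (by linarith) (by linarith)).2 (Or.inr rfl)
end

section
/- For all x in (0, π/3), f(x) ≠ f(π + x) or 3 f(x) ≠ f(π/2 - x) + f(π - 2x), where f(x) = sin(x)(1 - 1/(8 sin(x/2)^3)). That is, the system f(x) = f(π + x) and 3f(x) = f(π/2 - x) + f(π - 2x) has no common solution x in (0, π/3). -/
open Real Set

private lemma cube_lt_cube {a b : ℝ} (ha : 0 ≤ a) (h : a < b) : a^3 < b^3 := by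
  have hb : 0 < b := lt_of_le_of_lt ha h
  nlinarith [mul_nonneg ha ha, mul_pos hb hb, mul_nonneg ha hb.le]

private lemma cube_le_cube {a b : ℝ} (ha : 0 ≤ a) (h : a ≤ b) : a^3 ≤ b^3 := by
  have hb : 0 ≤ b := le_trans ha h
  nlinarith [mul_nonneg ha ha, mul_nonneg hb hb, mul_nonneg ha hb]

private lemma lem_E {s c : ℝ} (hs0 : 0 < s) (hc0 : 0 < c)
    (key : 1 - 1/(8*s^3) = -(1 - 1/(8*c^3))) : s^3 + c^3 = 16 * s^3 * c^3 := by
  have hs3 : (8:ℝ)*s^3 ≠ 0 := by positivity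
  have hc3 : (8:ℝ)*c^3 ≠ 0 := by positivity
  field_simp at key
  linarith [key]

private lemma lem_bounds {s c : ℝ} (hsc : s^2 + c^2 = 1) (hs0 : 0 < s) (hc0 : 0 < c)
    (hc1 : c ≤ 1) (hs_half : s < 1/2) (hE : s^3 + c^3 = 16 * s^3 * c^3) :
    (0.3968:ℝ) < s ∧ s < 0.4105 ∧ (0.9118:ℝ) < c ∧ c < 0.918 := by
  have hc_lb0 : (0.866 : ℝ) < c := by nlinarith
  have hb0 : (0.6494:ℝ) < c^3 := by
    have h := cube_lt_cube (by norm_num : (0:ℝ) ≤ 0.866) hc_lb0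
    norm_num at h; linarith
  have hb1 : c^3 ≤ 1 := by nlinarith
  have ha0 : (0:ℝ) < s^3 := by positivity
  have hc3pos : (0:ℝ) < 16*c^3 - 1 := by linarith
  have hs3_lb : (1:ℝ)/16 < s^3 := by nlinarith [mul_pos ha0 hc3pos]
  have hs3_ub : s^3 < 0.06916 := by nlinarith [mul_pos ha0 hc3pos]
  have hs_lb : (0.3968:ℝ) < s := by
    by_contra h
    push_neg at h
    have h' := cube_le_cube hs0.le h
    norm_num at h'; linarith
  have hs_ub : s < 0.4105 := by
    by_contra h
    push_neg at h
    have h' := cube_le_cube (by norm_num : (0:ℝ) ≤ 0.4105) h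
    norm_num at h'; linarith
  exact ⟨hs_lb, hs_ub, by nlinarith, by nlinarith⟩

private lemma lem_LHS {s c : ℝ} (hs0 : 0 < s) (hc0 : 0 < c)
    (hs_lb : (0.3968:ℝ) < s) (hc_lb : (0.9118:ℝ) < c)
    (key : 1 - 1/(8*s^3) = -(1 - 1/(8*c^3))) :
    3 * (2*s*c * (1 - 1/(8*s^3))) < -1.8 := by
  have hsc_lb : (0.3618:ℝ) < s*c := by nlinarith
  have hc3_lb : (0.758:ℝ) < c^3 := by
    have h := cube_lt_cube (by norm_num : (0:ℝ) ≤ 0.9118) hc_lb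
    norm_num at h; linarith
  have hrecc : 1/(8*c^3) < 0.165 := by
    rw [div_lt_iff₀ (by positivity)]; nlinarith
  have hfac : 1 - 1/(8*s^3) < -0.835 := by
    rw [key]; linarith
  nlinarith [mul_lt_mul_of_pos_left hfac (show (0:ℝ) < 2*(s*c) by positivity), hsc_lb]

private lemma lem_A {s c : ℝ} (hs0 : 0 < s) (hc0 : 0 < c)
    (hs_lb : (0.3968:ℝ) < s) (hs_ub : s < 0.4105)
    (hc_lb : (0.9118:ℝ) < c) (hc_ub : c < 0.918) :
    (1 - 2*s^2) * (1 - 1/(8 * (Real.sqrt 2 / 2 * (c - s))^3)) > -1.24 := by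
  have hsqrt2 : (1.4142:ℝ) < Real.sqrt 2 := by
    have h2' : Real.sqrt 2 ^ 2 = 2 := Real.sq_sqrt (by norm_num)
    nlinarith [Real.sqrt_nonneg 2]
  have hcs : (0.5013:ℝ) < c - s := by linarith
  have hcs_ub : c - s < 1 := by linarith
  have hu_lb : (0.35446:ℝ) < Real.sqrt 2 / 2 * (c - s) := by nlinarith
  set u := Real.sqrt 2 / 2 * (c - s) with hu
  clear_value u
  have hu0 : (0:ℝ) < u := by linarith
  have hu3 : (0.04453:ℝ) < u^3 := by
    have h := cube_lt_cube (by norm_num : (0:ℝ) ≤ 0.35446) hu_lb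
    norm_num at h; linarith
  have hrec : 1/(8*u^3) < 2.808 := by
    rw [div_lt_iff₀ (by positivity)]; nlinarith
  have hrpos : (0:ℝ) < 1/(8*u^3) := by positivity
  have hcx0 : (0:ℝ) < 1 - 2*s^2 := by nlinarith
  have hcxub : 1 - 2*s^2 < 0.6852 := by nlinarith
  nlinarith [hrec, hrpos, hcx0, hcxub]

private lemma lem_B {s c : ℝ} (hs0 : 0 < s) (hc0 : 0 < c)
    (hs_lb : (0.3968:ℝ) < s) (hs_ub : s < 0.4105) (hc_lb : (0.9118:ℝ) < c) :
    2 * (2*s*c) * (1 - 2*s^2) * (1 - 1/(8 * (1 - 2*s^2)^3)) > 0.54 := by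
  have hsc_lb : (0.3618:ℝ) < s*c := by nlinarith
  have hcx_lb : (0.6629:ℝ) < 1 - 2*s^2 := by nlinarith
  have hcx0 : (0:ℝ) < 1 - 2*s^2 := by linarith
  have hw3 : (0.2912:ℝ) < (1 - 2*s^2)^3 := by
    have h := cube_lt_cube (by norm_num : (0:ℝ) ≤ 0.6629) hcx_lb
    norm_num at h; linarith
  have hrec : 1/(8*(1 - 2*s^2)^3) < 0.43 := by
    rw [div_lt_iff₀ (by positivity)]; nlinarith
  have hrpos : (0:ℝ) < 1/(8*(1 - 2*s^2)^3) := by positivity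
  have hsin2x : (0.9593:ℝ) < 2 * (2*s*c) * (1 - 2*s^2) := by
    nlinarith [hsc_lb, hcx_lb]
  nlinarith [hrec, hrpos, hsin2x]

theorem stmt15 : ∀ x ∈ Ioo (0:ℝ) (π/3),
    ¬(f x = f (π + x) ∧ 3 * f x = f (π/2 - x) + f (π - 2*x)) := by
  rintro x ⟨hx0, hx3⟩ ⟨h1, h2⟩
  have hpi : (3.141592 : ℝ) < π := Real.pi_gt_d6
  set s := Real.sin (x/2) with hs_def
  set c := Real.cos (x/2) with hc_def
  have hsc : s^2 + c^2 = 1 := Real.sin_sq_add_cos_sq _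
  have hs0 : 0 < s := Real.sin_pos_of_pos_of_lt_pi (by linarith) (by linarith)
  have hc0 : 0 < c := Real.cos_pos_of_mem_Ioo ⟨by linarith, by linarith⟩
  have hc1 : c ≤ 1 := Real.cos_le_one _
  have hs_half : s < 1/2 := by
    have := Real.sin_lt_sin_of_lt_of_le_pi_div_two (x := x/2) (y := π/6)
      (by linarith) (by linarith) (by linarith)
    rwa [Real.sin_pi_div_six] at this
  -- trig identities
  have hsinx : Real.sin x = 2 * s * c := by
    have := Real.sin_two_mul (x/2)
    rw [show 2*(x/2) = x by ring] at this
    rw [this]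
  have hcosx : Real.cos x = 1 - 2 * s^2 := by
    have := Real.cos_two_mul (x/2)
    rw [show 2*(x/2) = x by ring] at this
    rw [this]; linarith only [hsc]
  have hsinpx : Real.sin (π + x) = -(2*s*c) := by
    rw [Real.sin_add]; simp [hsinx]
  have hsinpx2 : Real.sin ((π + x)/2) = c := by
    rw [show (π + x)/2 = x/2 + π/2 by ring, Real.sin_add_pi_div_two]
  have hu_def : Real.sin ((π/2 - x)/2) = Real.sqrt 2 / 2 * (c - s) := by
    rw [show (π/2 - x)/2 = π/4 - x/2 by ring, Real.sin_sub,
      Real.sin_pi_div_four, Real.cos_pi_div_four, ← hs_def, ← hc_def]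
    ring
  have hv_def : Real.sin ((π - 2*x)/2) = 1 - 2*s^2 := by
    rw [show (π - 2*x)/2 = π/2 - x by ring, Real.sin_pi_div_two_sub, hcosx]
  have hsinp2x : Real.sin (π - 2*x) = 2 * (2*s*c) * (1 - 2*s^2) := by
    rw [Real.sin_pi_sub, Real.sin_two_mul, hsinx, hcosx]
  clear_value s c
  -- equation 1 gives the key relation
  have hfx : f x = 2*s*c * (1 - 1/(8*s^3)) := by rw [f, hsinx, ← hs_def]
  have hfpx : f (π + x) = -(2*s*c) * (1 - 1/(8*c^3)) := by
    rw [f, hsinpx, hsinpx2]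
  have h2sc : (2*s*c) ≠ 0 := by positivity
  have key : (1 - 1/(8*s^3)) = -(1 - 1/(8*c^3)) :=
    mul_left_cancel₀ h2sc (by rw [← hfx, h1, hfpx]; ring)
  have hE := lem_E hs0 hc0 key
  obtain ⟨hs_lb, hs_ub, hc_lb, hc_ub⟩ := lem_bounds hsc hs0 hc0 hc1 hs_half hE
  have hLHS : 3 * f x < -1.8 := by
    rw [hfx]; exact lem_LHS hs0 hc0 hs_lb hc_lb key
  have hA : f (π/2 - x) > -1.24 := by
    rw [f, Real.sin_pi_div_two_sub, hcosx, hu_def]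
    exact lem_A hs0 hc0 hs_lb hs_ub hc_lb hc_ub
  have hB : f (π - 2*x) > 0.54 := by
    rw [f, hsinp2x, hv_def]
    exact lem_B hs0 hc0 hs_lb hs_ub hc_lb
  linarith only [h2, hLHS, hA, hB]
end
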